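/- arXiv:2103.14159 — 3 statements merged into one kernel-verified Lean document; each statement's English description precedes it below -/
import Mathlib

section
/- Let 𝒜 be an abelian category and 𝒯 a full subcategory. Consider the assertions: (1) 𝒯 = V^{⊥1} for some object V that is Ext^1-universal in 𝒜 and satisfies V^{(I)} ∈ V^{⊥1} for every set I for which the coproduct V^{(I)} exists in 𝒜; (2) 𝒯 is special preenveloping in 𝒜 and is closed under extensions and direct summands; (3) (^{⊥1}𝒯, 𝒯) is a right complete cotorsion pair in 𝒜. Then (1) implies (2), and (2) and (3) are equivalent. If in addition 𝒜 has an epi-generator and 𝒯 is closed under coproducts and quotients (for example, if 𝒯 is a torsion class), then all three assertions are equivalent. -/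
/-!
Common definitions for formalizing results of "Tilting preenvelopes and cotilting
precovers in general Abelian categories" (Parra–Saorín–Virili).

Conventions:
* Full subcategories of an abelian category `C` are encoded as `Set C`.
* "Sets" (index sets of families, coproducts, …) are encoded as types in the universe `v`
  of the morphisms of `C`.
* `Ext¹(X,Y) = 0` is encoded via the splitting of all short exact sequences
  `0 → Y → E → X → 0` (equivalently, the vanishing of the Yoneda Ext group).
* Relative (`…In B`) notions encode the corresponding notion computed inside the
  full (abelian exact) subcategory determined by `B : Set C`; the ambient case is
  `B = Set.univ`.
* Coproducts are not assumed to exist: a coproduct of a family existing in the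
  (sub)category is encoded by a cocone with the universal property (`IsCoproductIn`).
-/

open CategoryTheory CategoryTheory.Limits

universe w v u

attribute [local instance] CategoryTheory.Abelian.hasFiniteBiproducts

namespace Paper

variable {C : Type u} [Category.{v} C] [Abelian C]

/-- `(i, p)` is a short exact sequence `0 ⟶ A ⟶ E ⟶ B ⟶ 0` in `C`. -/
def IsShortExact {A E B : C} (i : A ⟶ E) (p : E ⟶ B) : Prop :=
  ∃ hw : i ≫ p = 0, (ShortComplex.mk i p hw).ShortExact

/-- `Q`, together with the injections `ι`, is the coproduct of the family `f`
inside the full subcategory determined by `B`. -/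
structure IsCoproductIn (B : Set C) {I : Type v} (f : I → C) (Q : C)
    (ι : ∀ i, f i ⟶ Q) : Prop where
  mem : ∀ i, f i ∈ B
  memQ : Q ∈ B
  desc : ∀ Z ∈ B, ∀ g : (∀ i, f i ⟶ Z), ∃! h : Q ⟶ Z, ∀ i, ι i ≫ h = g i

/-- `Ext¹(X, Y) = 0`, computed in the full subcategory determined by `B`:
every short exact sequence `0 → Y → E → X → 0` with `E ∈ B` splits. -/
def Ext1ZeroIn (B : Set C) (X Y : C) : Prop :=
  ∀ E ∈ B, ∀ (i : Y ⟶ E) (p : E ⟶ X), IsShortExact i p → ∃ r : E ⟶ Y, i ≫ r = 𝟙 Y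

/-- `Ext¹(X, Y) = 0` in the ambient abelian category. -/
def Ext1Zero (X Y : C) : Prop := Ext1ZeroIn Set.univ X Y

/-- `V^{⊥₁}`, computed in (the full subcategory determined by) `B`. -/
def rightPerp (B : Set C) (V : C) : Set C := {A ∈ B | Ext1ZeroIn B V A}

/-- `^{⊥₁}T`, computed in `B`. -/
def leftPerpSet (B T : Set C) : Set C := {A ∈ B | ∀ X ∈ T, Ext1ZeroIn B A X}

/-- `T^{⊥₁}`, computed in `B`. -/
def rightPerpSet (B T : Set C) : Set C := {A ∈ B | ∀ X ∈ T, Ext1ZeroIn B X A}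

/-- `Sub(X)` relative to `B`: objects of `B` admitting a monomorphism into an object of `X`. -/
def subIn (B X : Set C) : Set C := {A ∈ B | ∃ T ∈ X, ∃ f : A ⟶ T, Mono f}

/-- `Quot(X)` relative to `B`: objects of `B` which are epimorphic images of objects of `X`. -/
def quotIn (B X : Set C) : Set C := {A ∈ B | ∃ T ∈ X, ∃ f : T ⟶ A, Epi f}

/-- `(T, F)` is a torsion pair in (the full subcategory determined by) `B`. -/
structure IsTorsionPairIn (B T F : Set C) : Prop where
  eqF : F = {A ∈ B | ∀ X ∈ T, ∀ f : X ⟶ A, f = 0}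
  eqT : T = {A ∈ B | ∀ Y ∈ F, ∀ f : A ⟶ Y, f = 0}
  seq : ∀ A ∈ B, ∃ (X Y : C) (i : X ⟶ A) (p : A ⟶ Y), X ∈ T ∧ Y ∈ F ∧ IsShortExact i p

/-- `T` is a torsion class in `B`. -/
def IsTorsionClassIn (B T : Set C) : Prop := ∃ F, IsTorsionPairIn B T F

/-- `F` is a torsion-free class in `B`. -/
def IsTorsionFreeClassIn (B F : Set C) : Prop := ∃ T, IsTorsionPairIn B T F

/-- `φ : M ⟶ X` is a `T`-preenvelope. -/
structure IsPreenvelope (T : Set C) {M X : C} (φ : M ⟶ X) : Prop where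
  mem : X ∈ T
  fac : ∀ T' ∈ T, ∀ g : M ⟶ T', ∃ h : X ⟶ T', φ ≫ h = g

/-- `φ` is a semi-special `T`-preenvelope (relative to `B`):
a `T`-preenvelope whose cokernel lies in `^{⊥₁}T` (computed in `B`). -/
def IsSemiSpecialPreenvelopeIn (B T : Set C) {M X : C} (φ : M ⟶ X) : Prop :=
  IsPreenvelope T φ ∧ cokernel φ ∈ leftPerpSet B T

/-- `φ` is a special `T`-preenvelope (relative to `B`). -/
def IsSpecialPreenvelopeIn (B T : Set C) {M X : C} (φ : M ⟶ X) : Prop :=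
  Mono φ ∧ IsSemiSpecialPreenvelopeIn B T φ

/-- `T` is preenveloping in `B`. -/
def PreenvelopingIn (B T : Set C) : Prop :=
  ∀ M ∈ B, ∃ (X : C) (φ : M ⟶ X), IsPreenvelope T φ

/-- `T` is semi-special preenveloping in `B`. -/
def SemiSpecialPreenvelopingIn (B T : Set C) : Prop :=
  ∀ M ∈ B, ∃ (X : C) (φ : M ⟶ X), IsSemiSpecialPreenvelopeIn B T φ

/-- `T` is special preenveloping in `B`. -/
def SpecialPreenvelopingIn (B T : Set C) : Prop :=
  ∀ M ∈ B, ∃ (X : C) (φ : M ⟶ X), IsSpecialPreenvelopeIn B T φ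

/-- `φ : X ⟶ M` is a `T`-precover. -/
structure IsPrecover (T : Set C) {X M : C} (φ : X ⟶ M) : Prop where
  mem : X ∈ T
  fac : ∀ T' ∈ T, ∀ g : T' ⟶ M, ∃ h : T' ⟶ X, h ≫ φ = g

/-- `φ` is a semi-special `T`-precover (relative to `B`):
a `T`-precover whose kernel lies in `T^{⊥₁}` (computed in `B`). -/
def IsSemiSpecialPrecoverIn (B T : Set C) {X M : C} (φ : X ⟶ M) : Prop :=
  IsPrecover T φ ∧ kernel φ ∈ rightPerpSet B T

/-- `T` is precovering in `B`. -/
def PrecoveringIn (B T : Set C) : Prop :=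
  ∀ M ∈ B, ∃ (X : C) (φ : X ⟶ M), IsPrecover T φ

/-- `T` is semi-special precovering in `B`. -/
def SemiSpecialPrecoveringIn (B T : Set C) : Prop :=
  ∀ M ∈ B, ∃ (X : C) (φ : X ⟶ M), IsSemiSpecialPrecoverIn B T φ

/-- `Add(V)` relative to `B`: direct summands of coproducts (existing in `B`)
of copies of `V`. -/
def addIn (B : Set C) (V : C) : Set C :=
  {A ∈ B | ∃ (I : Type v) (Q : C) (ι : ∀ _ : I, V ⟶ Q),
     IsCoproductIn B (fun _ : I => V) Q ι ∧ ∃ (s : A ⟶ Q) (r : Q ⟶ A), s ≫ r = 𝟙 A}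

/-- `Gen(V)` relative to `B`: quotients of objects of `Add(V)`. -/
def genIn (B : Set C) (V : C) : Set C :=
  {A ∈ B | ∃ X ∈ addIn B V, ∃ p : X ⟶ A, Epi p}

/-- `Pres(V)` relative to `B`: cokernels of morphisms between objects of `Add(V)`. -/
def presIn (B : Set C) (V : C) : Set C :=
  {A ∈ B | ∃ X ∈ addIn B V, ∃ Y ∈ addIn B V,
     ∃ (f : X ⟶ Y) (c : Y ⟶ A) (hw : f ≫ c = 0), Epi c ∧ (ShortComplex.mk f c hw).Exact}

/-- `Ḡen(V) = Sub(Gen(V))` relative to `B`. -/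
def barGenIn (B : Set C) (V : C) : Set C := subIn B (genIn B V)

/-- The class `X` is cogenerating in `B`. -/
def CogeneratingIn (B X : Set C) : Prop := ∀ A ∈ B, ∃ T ∈ X, ∃ f : A ⟶ T, Mono f

/-- The class `X` is generating in `B`. -/
def GeneratingIn (B X : Set C) : Prop := ∀ A ∈ B, ∃ T ∈ X, ∃ f : T ⟶ A, Epi f

/-- `V` is a quasi-tilting object of (the full subcategory determined by) `B`:
`Gen(V)` is a torsion class and `Gen(V) = Pres(V) = Ḡen(V) ∩ V^{⊥₁}`. -/
def IsQuasiTiltingIn (B : Set C) (V : C) : Prop :=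
  V ∈ B ∧ IsTorsionClassIn B (genIn B V) ∧ genIn B V = presIn B V ∧
    genIn B V = barGenIn B V ∩ rightPerp B V

/-- `V` is a tilting object of `B`: quasi-tilting with `Gen(V)` cogenerating. -/
def IsTiltingIn (B : Set C) (V : C) : Prop :=
  IsQuasiTiltingIn B V ∧ CogeneratingIn B (genIn B V)

/-- `G` is an epi-generator of `B`: every object of `B` is an epimorphic image of a
coproduct (existing in `B`) of copies of `G`. -/
def IsEpiGeneratorIn (B : Set C) (G : C) : Prop :=
  G ∈ B ∧ ∀ A ∈ B, ∃ (I : Type v) (Q : C) (ι : ∀ _ : I, G ⟶ Q),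
    IsCoproductIn B (fun _ : I => G) Q ι ∧ ∃ p : Q ⟶ A, Epi p

/-- `0 → A —u→ X → V^{(J)} → 0` is a universal extension of `V` by `A` (relative to `B`):
the right end of the sequence is a nonempty coproduct of copies of `V` existing in `B`,
and the induced map `Ext¹(V,A) → Ext¹(V,X)` is zero (encoded: for every extension
`0 → A —i→ E → V → 0` with `E ∈ B`, its pushout along `u` splits, i.e. `u` extends
along `i`). -/
def IsUniversalExtensionIn (B : Set C) (V A X : C) (u : A ⟶ X) : Prop :=
  A ∈ B ∧ X ∈ B ∧
  (∃ (J : Type v) (_ : Nonempty J) (P : C) (κ : ∀ _ : J, V ⟶ P) (p : X ⟶ P),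
     IsCoproductIn B (fun _ : J => V) P κ ∧ IsShortExact u p) ∧
  (∀ E ∈ B, ∀ (i : A ⟶ E) (q : E ⟶ V), IsShortExact i q → ∃ ψ : E ⟶ X, i ≫ ψ = u)

/-- `V` is `Ext¹`-universal in `B`: universal extensions of `V` by every object exist. -/
def IsExt1UniversalIn (B : Set C) (V : C) : Prop :=
  ∀ A ∈ B, ∃ (X : C) (u : A ⟶ X), IsUniversalExtensionIn B V A X u

/-- `(X, Y)` is a cotorsion pair in (the full subcategory determined by) `B`. -/
def IsCotorsionPairIn (B X Y : Set C) : Prop :=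
  Y = {A ∈ B | ∀ Z ∈ X, Ext1ZeroIn B Z A} ∧
  X = {A ∈ B | ∀ Z ∈ Y, Ext1ZeroIn B A Z}

/-- The pair `(X, Y)` is right complete in `B`: every `A ∈ B` admits a short exact
sequence `0 → A → Y' → X' → 0` with `Y' ∈ Y`, `X' ∈ X`. -/
def RightCompleteIn (B X Y : Set C) : Prop :=
  ∀ A ∈ B, ∃ (Y' X' : C) (i : A ⟶ Y') (p : Y' ⟶ X'), Y' ∈ Y ∧ X' ∈ X ∧ IsShortExact i p

/-- The pair `(X, Y)` is left complete in `B`: every `A ∈ B` admits a short exact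
sequence `0 → Y' → X' → A → 0` with `Y' ∈ Y`, `X' ∈ X`. -/
def LeftCompleteIn (B X Y : Set C) : Prop :=
  ∀ A ∈ B, ∃ (Y' X' : C) (i : Y' ⟶ X') (p : X' ⟶ A), Y' ∈ Y ∧ X' ∈ X ∧ IsShortExact i p

/-- The full subcategory determined by `B` is reflective in `C`:
the (fully faithful) inclusion functor has a left adjoint. -/
def IsReflectiveSub (B : Set C) : Prop :=
  (ObjectProperty.ι (· ∈ B)).IsRightAdjoint

/-- The full subcategory determined by `B` is coreflective in `C`:
the inclusion functor has a right adjoint. -/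
def IsCoreflectiveSub (B : Set C) : Prop :=
  (ObjectProperty.ι (· ∈ B)).IsLeftAdjoint

/-- `Ext²(V, A) = 0` (Yoneda `Ext²`): every `2`-fold extension
`0 → A —g→ X₁ —f→ X₀ —p→ V → 0` represents the trivial class, i.e. (by the standard
long-exact-sequence criterion) the extension `0 → A → X₁ → im f → 0` extends to an
extension of `X₀` by `A`. -/
def Ext2Zero (V A : C) : Prop :=
  ∀ (X1 X0 : C) (g : A ⟶ X1) (f : X1 ⟶ X0) (p : X0 ⟶ V)
    (w1 : g ≫ f = 0) (w2 : f ≫ p = 0),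
    Mono g → Epi p → (ShortComplex.mk g f w1).Exact → (ShortComplex.mk f p w2).Exact →
    ∃ (Y : C) (a : A ⟶ Y) (b : Y ⟶ X0), IsShortExact a b ∧
      ∃ φ : X1 ⟶ Y, g ≫ φ = a ∧ φ ≫ b = f

/-- `V` has projective dimension at most `1`: `Ext²(V, A) = 0` for every `A`. -/
def ProjDimLE1 (V : C) : Prop := ∀ A : C, Ext2Zero V A

/-- The "elements" of the (possibly large) Yoneda `Ext¹(X, Y)`: short exact sequences
`0 → Y → E → X → 0`. -/
def ExtElem (X Y : C) : Type (max u v) :=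
  Σ' (E : C) (i : Y ⟶ E) (p : E ⟶ X), IsShortExact i p

/-- Yoneda equivalence of extensions. -/
def extRel (X Y : C) : ExtElem X Y → ExtElem X Y → Prop :=
  fun e₁ e₂ => ∃ φ : e₁.1 ⟶ e₂.1, e₁.2.1 ≫ φ = e₂.2.1 ∧ φ ≫ e₂.2.2.1 = e₁.2.2.1

/-- The (possibly large) Yoneda `Ext¹(X, Y)`, as the quotient of the collection
of extensions by Yoneda equivalence. -/
def ExtClass (X Y : C) : Type (max u v) := Quot (extRel X Y)

/-- `Ext¹(A, B)` is a finitely generated (right) `End(A)`-module: there are `n : ℕ` and a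
short exact sequence `0 → B → X → A^n → 0` whose connecting map
`Hom(A, A^n) → Ext¹(A, B)` is surjective, i.e. every extension of `A` by `B` is a pullback
of the fixed one along some `h : A ⟶ A^n`. -/
def Ext1FGEnd (A B : C) : Prop :=
  ∃ (n : ℕ) (X : C) (u : B ⟶ X) (p : X ⟶ ⨁ (fun _ : Fin n => A)),
    IsShortExact u p ∧
    ∀ (E : C) (i : B ⟶ E) (q : E ⟶ A), IsShortExact i q →
      ∃ (h : A ⟶ ⨁ (fun _ : Fin n => A)) (φ : E ⟶ X), i ≫ φ = u ∧ φ ≫ p = q ≫ h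

/-- `∐¹_I f = 0`: for every `I`-indexed family of short exact sequences
`0 → Xᵢ → Yᵢ → fᵢ → 0`, the induced morphism `∐ Xᵢ → ∐ Yᵢ` between (existing)
coproducts is a monomorphism. -/
def CoprodDerivedZeroFam {I : Type v} (f : I → C) : Prop :=
  ∀ (X Y : I → C) (u : ∀ i, X i ⟶ Y i) (p : ∀ i, Y i ⟶ f i),
    (∀ i, IsShortExact (u i) (p i)) →
    ∀ (QX QY : C) (ιX : ∀ i, X i ⟶ QX) (ιY : ∀ i, Y i ⟶ QY) (uu : QX ⟶ QY),
      IsCoproductIn Set.univ X QX ιX → IsCoproductIn Set.univ Y QY ιY →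
      (∀ i, ιX i ≫ uu = u i ≫ ιY i) → Mono uu

/-- `∐¹_I V = 0` for the constant family at `V`. -/
def CoprodDerivedZero (I : Type v) (V : C) : Prop :=
  CoprodDerivedZeroFam (fun _ : I => V)

/-- Witness that the category `D` is `Hom`-finite: a commutative ring `R` together with an
`R`-linear structure on `D` for which all `Hom`-modules are finitely generated. -/
structure HomFiniteStruct (D : Type u) [Category.{v} D] [Preadditive D] :
    Type (max u (v + 1)) where
  R : Type v
  [commRing : CommRing R]
  [linear : CategoryTheory.Linear R D]
  homFinite : ∀ A B : D, Module.Finite R (A ⟶ B)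

/-- The category `D` is `Hom`-finite. -/
def HomFinite (D : Type u) [Category.{v} D] [Preadditive D] : Prop :=
  Nonempty (HomFiniteStruct D)

/-- `Q`, with injections `ι`, is a coproduct of the family `f` in an arbitrary category. -/
def IsCoproductCocone {D : Type u} [Category.{v} D] {I : Type w} (f : I → D) (Q : D)
    (ι : ∀ i, f i ⟶ Q) : Prop :=
  ∀ (Z : D) (g : ∀ i, f i ⟶ Z), ∃! h : Q ⟶ Z, ∀ i, ι i ≫ h = g i

/-- The category `D` satisfies (Ab.4): it has all (small) coproducts, and coproducts
of monomorphisms are monomorphisms (for abelian categories, the latter is equivalent to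
the exactness of coproducts). -/
def Ab4Type (D : Type u) [Category.{v} D] : Prop :=
  HasCoproducts.{v} D ∧
  ∀ (I : Type v) (X Y : I → D) (u : ∀ i, X i ⟶ Y i), (∀ i, Mono (u i)) →
    ∀ (QX QY : D) (ιX : ∀ i, X i ⟶ QX) (ιY : ∀ i, Y i ⟶ QY) (uu : QX ⟶ QY),
      IsCoproductCocone X QX ιX → IsCoproductCocone Y QY ιY →
      (∀ i, ιX i ≫ uu = u i ≫ ιY i) → Mono uu

/-- The category `D` satisfies (Ab.5): it has all (small) coproducts and directed
(filtered) colimits of monomorphisms are monomorphisms (for abelian categories the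
latter is equivalent to the exactness of directed colimits). -/
def Ab5Type (D : Type u) [Category.{v} D] : Prop :=
  HasCoproducts.{v} D ∧
  ∀ (J : Type v) [SmallCategory J] [IsFiltered J] (F G : J ⥤ D) (α : F ⟶ G),
    (∀ j, Mono (α.app j)) →
    ∀ (cF : Cocone F) (cG : Cocone G), IsColimit cF → IsColimit cG →
      ∀ m : cF.pt ⟶ cG.pt, (∀ j, cF.ι.app j ≫ m = α.app j ≫ cG.ι.app j) → Mono m

/-- A ring `S` is left coherent: every finitely generated left ideal is finitely
presented as a left `S`-module. -/
def LeftCoherentRing (S : Type u) [Ring S] : Prop :=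
  ∀ J : Submodule S S, J.FG → Module.FinitePresentation S J

/-- A ring `S` is right coherent: every finitely generated right ideal (i.e. finitely
generated left ideal of `Sᵐᵒᵖ`) is finitely presented as a right `S`-module. -/
def RightCoherentRing (S : Type u) [Ring S] : Prop :=
  ∀ J : Submodule Sᵐᵒᵖ Sᵐᵒᵖ, J.FG → Module.FinitePresentation Sᵐᵒᵖ J

end Paper

/-!
STATEMENT 1 (Corollary `cor.special-preenveloping-arbitraryA`).
-/

namespace Stmt1

open Paper CategoryTheory CategoryTheory.Limits

variable {C : Type u} [Category.{v} C] [Abelian C]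

/-- Assertion (1): `𝒯 = V^{⊥₁}` for an `Ext¹`-universal object `V` such that every
coproduct `V^{(I)}` existing in `𝒜` lies in `V^{⊥₁}`. -/
def A1 (T : Set C) : Prop :=
  ∃ V : C, T = rightPerp Set.univ V ∧ IsExt1UniversalIn Set.univ V ∧
    ∀ (I : Type v) (Q : C) (ι : ∀ _ : I, V ⟶ Q),
      IsCoproductIn Set.univ (fun _ : I => V) Q ι → Ext1Zero V Q

/-- Assertion (2): `𝒯` is special preenveloping and closed under extensions and
direct summands. -/
def A2 (T : Set C) : Prop :=
  SpecialPreenvelopingIn Set.univ T ∧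
  (∀ ⦃A E X : C⦄ (i : A ⟶ E) (p : E ⟶ X),
    IsShortExact i p → A ∈ T → X ∈ T → E ∈ T) ∧
  (∀ ⦃A X : C⦄, X ∈ T → ∀ (s : A ⟶ X) (r : X ⟶ A), s ≫ r = 𝟙 A → A ∈ T)

/-- Assertion (3): `(^{⊥₁}𝒯, 𝒯)` is a right complete cotorsion pair in `𝒜`. -/
def A3 (T : Set C) : Prop :=
  IsCotorsionPairIn Set.univ (leftPerpSet Set.univ T) T ∧
  RightCompleteIn Set.univ (leftPerpSet Set.univ T) T


section Infra

variable {C : Type u} [Category.{v} C] [Abelian C]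

theorem ses_w {A E B : C} {i : A ⟶ E} {p : E ⟶ B} (h : IsShortExact i p) : i ≫ p = 0 :=
  h.choose

theorem ses_mono {A E B : C} {i : A ⟶ E} {p : E ⟶ B} (h : IsShortExact i p) : Mono i :=
  h.choose_spec.mono_f

theorem ses_epi {A E B : C} {i : A ⟶ E} {p : E ⟶ B} (h : IsShortExact i p) : Epi p :=
  h.choose_spec.epi_g

theorem ses_lift {A E B Z : C} {i : A ⟶ E} {p : E ⟶ B} (h : IsShortExact i p)
    (z : Z ⟶ E) (hz : z ≫ p = 0) : ∃ m : Z ⟶ A, m ≫ i = z := by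
  obtain ⟨hw, hse⟩ := h
  haveI := hse.mono_f
  exact hse.exact.lift' z hz

theorem ses_desc {A E B Z : C} {i : A ⟶ E} {p : E ⟶ B} (h : IsShortExact i p)
    (t : E ⟶ Z) (ht : i ≫ t = 0) : ∃ s : B ⟶ Z, p ≫ s = t := by
  obtain ⟨hw, hse⟩ := h
  haveI := hse.epi_g
  exact hse.exact.desc' t ht

theorem ses_mk_ker {A E B : C} {i : A ⟶ E} {p : E ⟶ B} (hm : Mono i) (he : Epi p)
    (hw : i ≫ p = 0) (hk : ∀ {Z : C} (z : Z ⟶ E), z ≫ p = 0 → ∃ m : Z ⟶ A, m ≫ i = z) :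
    IsShortExact i p := by
  refine ⟨hw, ?_⟩
  haveI := hm
  have hlim : IsLimit (KernelFork.ofι (f := p) i hw) :=
    KernelFork.IsLimit.ofι' i hw (fun {Z} z hz => ⟨(hk z hz).choose, (hk z hz).choose_spec⟩)
  exact ShortComplex.ShortExact.mk' ((ShortComplex.mk i p hw).exact_of_f_is_kernel hlim) hm he

theorem ses_mk_coker {A E B : C} {i : A ⟶ E} {p : E ⟶ B} (hm : Mono i) (he : Epi p)
    (hw : i ≫ p = 0) (hc : ∀ {Z : C} (t : E ⟶ Z), i ≫ t = 0 → ∃ s : B ⟶ Z, p ≫ s = t) :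
    IsShortExact i p := by
  refine ⟨hw, ?_⟩
  haveI := he
  have hcolim : IsColimit (CokernelCofork.ofπ (f := i) p hw) :=
    CokernelCofork.IsColimit.ofπ' p hw (fun {Z} t ht => ⟨(hc t ht).choose, (hc t ht).choose_spec⟩)
  exact ShortComplex.ShortExact.mk' ((ShortComplex.mk i p hw).exact_of_g_is_cokernel hcolim) hm he

theorem ses_section_of_retraction {A E B : C} {i : A ⟶ E} {p : E ⟶ B} (h : IsShortExact i p)
    {r : E ⟶ A} (hr : i ≫ r = 𝟙 A) : ∃ s : B ⟶ E, s ≫ p = 𝟙 B := by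
  obtain ⟨s, hs⟩ := ses_desc h (𝟙 E - r ≫ i)
    (by rw [Preadditive.comp_sub, Category.comp_id, ← Category.assoc, hr, Category.id_comp, sub_self])
  refine ⟨s, ?_⟩
  haveI := ses_epi h
  rw [← cancel_epi p, ← Category.assoc, hs, Preadditive.sub_comp, Category.id_comp, Category.assoc,
    ses_w h, comp_zero, sub_zero, Category.comp_id]

theorem ses_retraction_of_section {A E B : C} {i : A ⟶ E} {p : E ⟶ B} (h : IsShortExact i p)
    {s : B ⟶ E} (hs : s ≫ p = 𝟙 B) : ∃ r : E ⟶ A, i ≫ r = 𝟙 A := by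
  obtain ⟨r, hrr⟩ := ses_lift h (𝟙 E - p ≫ s)
    (by rw [Preadditive.sub_comp, Category.id_comp, Category.assoc, hs, Category.comp_id, sub_self])
  refine ⟨r, ?_⟩
  haveI := ses_mono h
  rw [← cancel_mono i, Category.assoc, hrr, Preadditive.comp_sub, Category.comp_id, ← Category.assoc,
    ses_w h, zero_comp, sub_zero, Category.id_comp]

theorem ses_pushout {A E B X : C} {i : A ⟶ E} {p : E ⟶ B} (h : IsShortExact i p) (f : A ⟶ X) :
    ∃ d : pushout i f ⟶ B, IsShortExact (pushout.inr i f) d ∧ pushout.inl i f ≫ d = p := by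
  have hw := ses_w h
  refine ⟨pushout.desc p 0 (by rw [comp_zero]; exact hw), ?_, pushout.inl_desc _ _ _⟩
  haveI := ses_mono h
  haveI := ses_epi h
  refine ses_mk_coker inferInstance ?_ (pushout.inr_desc _ _ _) ?_
  · exact epi_of_epi_fac (pushout.inl_desc (f := i) (g := f) p 0 _)
  · intro Z t ht
    have h1 : i ≫ pushout.inl i f ≫ t = 0 := by
      rw [← Category.assoc, pushout.condition, Category.assoc, ht, comp_zero]
    obtain ⟨s, hs⟩ := ses_desc h (pushout.inl i f ≫ t) h1
    refine ⟨s, ?_⟩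
    apply pushout.hom_ext
    · rw [← Category.assoc, pushout.inl_desc, hs]
    · rw [← Category.assoc, pushout.inr_desc, zero_comp, ht]

theorem ses_pullback {A E B B' : C} {i : A ⟶ E} {p : E ⟶ B} (h : IsShortExact i p) (f : B' ⟶ B) :
    ∃ l : A ⟶ pullback p f, IsShortExact l (pullback.snd p f) ∧ l ≫ pullback.fst p f = i := by
  have hw := ses_w h
  refine ⟨pullback.lift i 0 (by rw [zero_comp]; exact hw), ?_, pullback.lift_fst _ _ _⟩
  haveI := ses_mono h
  haveI := ses_epi h
  refine ses_mk_ker ?_ inferInstance (pullback.lift_snd _ _ _) ?_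
  · exact mono_of_mono_fac (pullback.lift_fst (f := p) (g := f) i 0 _)
  · intro Z z hz
    have h1 : (z ≫ pullback.fst p f) ≫ p = 0 := by
      rw [Category.assoc, pullback.condition, ← Category.assoc, hz, zero_comp]
    obtain ⟨m, hm⟩ := ses_lift h (z ≫ pullback.fst p f) h1
    refine ⟨m, ?_⟩
    apply pullback.hom_ext
    · rw [Category.assoc, pullback.lift_fst, hm]
    · rw [Category.assoc, pullback.lift_snd, comp_zero, hz]

theorem ses_cokernel_iso {A E B : C} {i : A ⟶ E} {p : E ⟶ B} (h : IsShortExact i p) :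
    ∃ e : cokernel i ⟶ B, IsIso e ∧ cokernel.π i ≫ e = p := by
  refine ⟨cokernel.desc i p (ses_w h), ?_, by simp⟩
  obtain ⟨s, hs⟩ := ses_desc h (cokernel.π i) (cokernel.condition i)
  haveI := ses_epi h
  refine ⟨s, ?_, ?_⟩
  · rw [← cancel_epi (cokernel.π i), ← Category.assoc, cokernel.π_desc, hs, Category.comp_id]
  · rw [← cancel_epi p, ← Category.assoc, hs, cokernel.π_desc, Category.comp_id]

end Infra


section Infra2

variable {C : Type u} [Category.{v} C] [Abelian C]

theorem coprod_desc {I : Type v} {f : I → C} {Q : C} {ι : ∀ i, f i ⟶ Q}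
    (hco : IsCoproductIn (Set.univ : Set C) f Q ι) {Z : C} (g : ∀ i, f i ⟶ Z) :
    ∃ h : Q ⟶ Z, ∀ i, ι i ≫ h = g i :=
  (hco.desc Z trivial g).exists

theorem coprod_uniq {I : Type v} {f : I → C} {Q : C} {ι : ∀ i, f i ⟶ Q}
    (hco : IsCoproductIn (Set.univ : Set C) f Q ι) {Z : C} {h h' : Q ⟶ Z}
    (hh : ∀ i, ι i ≫ h = ι i ≫ h') : h = h' := by
  obtain ⟨h₀, -, hu⟩ := hco.desc Z trivial (fun i => ι i ≫ h')
  rw [hu h hh, hu h' (fun i => rfl)]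

/-- If `Ext¹(V, A) = 0` then `Ext¹(V^(J), A) = 0`. -/
theorem ext1ZeroIn_coprod {J : Type v} {Vq P A : C} {κ : ∀ _ : J, Vq ⟶ P}
    (hco : IsCoproductIn (Set.univ : Set C) (fun _ : J => Vq) P κ)
    (h : Ext1ZeroIn (Set.univ : Set C) Vq A) : Ext1ZeroIn (Set.univ : Set C) P A := by
  intro E _ i p hse
  have sect : ∀ j : J, ∃ m : Vq ⟶ E, m ≫ p = κ j := by
    intro j
    obtain ⟨l, hl, hlf⟩ := ses_pullback hse (κ j)
    obtain ⟨r, hr⟩ := h _ trivial l (pullback.snd p (κ j)) hl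
    obtain ⟨s, hs⟩ := ses_section_of_retraction hl hr
    exact ⟨s ≫ pullback.fst p (κ j),
      by rw [Category.assoc, pullback.condition, ← Category.assoc, hs, Category.id_comp]⟩
  obtain ⟨σ, hσ⟩ := coprod_desc hco (fun j => (sect j).choose)
  have hσp : σ ≫ p = 𝟙 P := by
    refine coprod_uniq hco (fun j => ?_)
    rw [← Category.assoc, hσ j, (sect j).choose_spec, Category.comp_id]
  exact ses_retraction_of_section hse hσp

/-- Transport of `Ext¹(-, A) = 0` along an isomorphism in the first variable. -/
theorem ext1ZeroIn_iso {B₁ B₂ A : C} (e : B₁ ⟶ B₂) [IsIso e]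
    (h : Ext1ZeroIn (Set.univ : Set C) B₂ A) : Ext1ZeroIn (Set.univ : Set C) B₁ A := by
  intro E _ i p hse
  haveI := ses_mono hse
  haveI := ses_epi hse
  refine h E trivial i (p ≫ e) (ses_mk_ker inferInstance inferInstance
    (by rw [← Category.assoc, ses_w hse, zero_comp]) ?_)
  intro Z z hz
  exact ses_lift hse z (by rw [← cancel_mono e, Category.assoc, hz, zero_comp])

/-- The key lemma: a fragment of the long exact sequence argument.
Given `0 → M → X → Pc → 0` and `0 → X → E → Vv → 0`, if `Ext¹(Vv, Pc) = 0` and every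
extension of `Vv` by `M` admits a map to `X` extending `u`, then the second sequence splits. -/
theorem key_retraction {M X E Pc Vv : C} (u : M ⟶ X) (p : X ⟶ Pc) (hup : IsShortExact u p)
    (j : X ⟶ E) (q : E ⟶ Vv) (hjq : IsShortExact j q)
    (h1 : Ext1ZeroIn (Set.univ : Set C) Vv Pc)
    (h2 : ∀ (F : C) (i : M ⟶ F) (w : F ⟶ Vv), IsShortExact i w → ∃ ψ : F ⟶ X, i ≫ ψ = u) :
    ∃ r : E ⟶ X, j ≫ r = 𝟙 X := by
  haveI := ses_mono hup
  haveI := ses_epi hup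
  haveI := ses_mono hjq
  haveI := ses_epi hjq
  -- push out the second sequence along p to get `0 → Pc → W → Vv → 0`, which splits
  obtain ⟨d, hd, hinl⟩ := ses_pushout hjq p
  obtain ⟨rW, hrW⟩ := h1 _ trivial (pushout.inr j p) d hd
  set t : E ⟶ Pc := pushout.inl j p ≫ rW with ht
  have hjt : j ≫ t = p := by
    rw [ht, ← Category.assoc, pushout.condition, Category.assoc, hrW, Category.comp_id]
  -- the sequence `0 → M → E → Pc ⊞ Vv → 0`
  set c : E ⟶ Pc ⊞ Vv := biprod.lift t q with hc
  have hbig : IsShortExact (u ≫ j) c := by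
    refine ses_mk_ker inferInstance ?_ ?_ ?_
    · -- epi c
      refine Preadditive.epi_of_cancel_zero c (fun {R} w hw => ?_)
      have hdecomp : c ≫ w = t ≫ (biprod.inl ≫ w) + q ≫ (biprod.inr ≫ w) := by
        calc c ≫ w = c ≫ (biprod.fst ≫ biprod.inl + biprod.snd ≫ biprod.inr) ≫ w := by
              rw [biprod.total, Category.id_comp]
          _ = (c ≫ biprod.fst) ≫ (biprod.inl ≫ w) + (c ≫ biprod.snd) ≫ (biprod.inr ≫ w) := by
              simp only [Preadditive.add_comp, Preadditive.comp_add, Category.assoc]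
          _ = t ≫ (biprod.inl ≫ w) + q ≫ (biprod.inr ≫ w) := by
              rw [hc, biprod.lift_fst, biprod.lift_snd]
      have ha : biprod.inl ≫ w = (0 : Pc ⟶ R) := by
        have h3 : p ≫ biprod.inl ≫ w = 0 := by
          have h4 : j ≫ c ≫ w = 0 := by rw [hw, comp_zero]
          rw [hdecomp, Preadditive.comp_add, ← Category.assoc j t, hjt,
            ← Category.assoc j q, ses_w hjq, zero_comp, add_zero] at h4
          exact h4
        exact (cancel_epi p).1 (by rw [h3, comp_zero])
      have hbz : biprod.inr ≫ w = (0 : Vv ⟶ R) := by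
        rw [hw] at hdecomp
        rw [ha, comp_zero, zero_add] at hdecomp
        exact (cancel_epi q).1 (by rw [← hdecomp, comp_zero])
      calc w = (biprod.fst ≫ biprod.inl + biprod.snd ≫ biprod.inr) ≫ w := by
            rw [biprod.total, Category.id_comp]
        _ = biprod.fst ≫ (biprod.inl ≫ w) + biprod.snd ≫ (biprod.inr ≫ w) := by
            simp only [Preadditive.add_comp, Category.assoc]
        _ = 0 := by rw [ha, hbz, comp_zero, comp_zero, add_zero]
    · apply biprod.hom_ext <;> rw [hc] <;> simp only [Category.assoc, biprod.lift_fst,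
        biprod.lift_snd, zero_comp]
      · rw [hjt, ses_w hup]
      · rw [ses_w hjq, comp_zero]
    · intro Z z hz
      have hzq : z ≫ q = 0 := by
        have : z ≫ c ≫ biprod.snd = 0 := by rw [← Category.assoc, hz, zero_comp]
        rw [hc] at this; simpa using this
      obtain ⟨zX, hzX⟩ := ses_lift hjq z hzq
      have hzp : zX ≫ p = 0 := by
        rw [← hjt, ← Category.assoc, hzX]
        have : z ≫ c ≫ biprod.fst = 0 := by rw [← Category.assoc, hz, zero_comp]
        rw [hc] at this; simpa using this
      obtain ⟨zM, hzM⟩ := ses_lift hup zX hzp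
      exact ⟨zM, by rw [← Category.assoc, hzM, hzX]⟩
  -- pull back the big sequence along `biprod.inr : Vv → Pc ⊞ Vv`
  obtain ⟨l, hl, hlf⟩ := ses_pullback hbig (biprod.inr : Vv ⟶ Pc ⊞ Vv)
  obtain ⟨ψ, hψ⟩ := h2 _ l (pullback.snd c biprod.inr) hl
  -- `Y := pullback p t`, with `snd : Y → E` epi
  haveI : Epi (pullback.snd p t) := by infer_instance
  set σE : pullback p t ⟶ E := pullback.snd p t - pullback.fst p t ≫ j with hσE
  have hσEt : σE ≫ t = 0 := by
    rw [hσE, Preadditive.sub_comp, Category.assoc, hjt, pullback.condition, sub_self]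
  have hσEc : σE ≫ c = (σE ≫ q) ≫ biprod.inr := by
    apply biprod.hom_ext <;> rw [hc] <;> simp [hσEt]
  set σ : pullback p t ⟶ pullback c (biprod.inr : Vv ⟶ Pc ⊞ Vv) :=
    pullback.lift σE (σE ≫ q) hσEc with hσ
  haveI : Mono (pullback.fst c (biprod.inr : Vv ⟶ Pc ⊞ Vv)) := by infer_instance
  -- descend `σ ≫ ψ + fst` along the epi `snd : Y → E`
  set γ' : pullback p t ⟶ X := σ ≫ ψ + pullback.fst p t with hγ'
  have hKB : IsShortExact (kernel.ι (pullback.snd p t)) (pullback.snd p t) := by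
    refine ses_mk_ker inferInstance inferInstance (kernel.condition _) ?_
    intro Z z hz
    exact ⟨kernel.lift _ z hz, kernel.lift_ι _ z hz⟩
  have hkγ' : kernel.ι (pullback.snd p t) ≫ γ' = 0 := by
    have hkp : (kernel.ι (pullback.snd p t) ≫ pullback.fst p t) ≫ p = 0 := by
      rw [Category.assoc, pullback.condition, ← Category.assoc, kernel.condition, zero_comp]
    obtain ⟨m, hm⟩ := ses_lift hup (kernel.ι (pullback.snd p t) ≫ pullback.fst p t) hkp
    have hkσ : kernel.ι (pullback.snd p t) ≫ σ = -(m ≫ l) := by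
      have h9 : (kernel.ι (pullback.snd p t) ≫ σ) ≫ pullback.fst c biprod.inr
          = (-(m ≫ l)) ≫ pullback.fst c biprod.inr := by
        simp only [hσ, hσE, hlf, Category.assoc, pullback.lift_fst, Preadditive.comp_sub,
          kernel.condition, zero_sub, Preadditive.neg_comp, neg_inj]
        rw [← Category.assoc, ← Category.assoc, hm]
      exact (cancel_mono _).1 h9
    rw [hγ', Preadditive.comp_add, ← Category.assoc, hkσ, Preadditive.neg_comp,
      Category.assoc, hψ, hm, neg_add_cancel]
  obtain ⟨γ, hγ⟩ := ses_desc hKB γ' hkγ'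
  refine ⟨γ, ?_⟩
  -- evaluate on the canonical lift `ς : X → Y`
  have hςcond : 𝟙 X ≫ p = j ≫ t := by rw [Category.id_comp, hjt]
  set ς : X ⟶ pullback p t := pullback.lift (𝟙 X) j hςcond with hς
  have hςσ : ς ≫ σ = 0 := by
    have h9 : (ς ≫ σ) ≫ pullback.fst c biprod.inr
        = (0 : X ⟶ pullback c (biprod.inr : Vv ⟶ Pc ⊞ Vv)) ≫ pullback.fst c biprod.inr := by
      rw [Category.assoc, hσ, pullback.lift_fst, hσE, Preadditive.comp_sub, hς,
        pullback.lift_snd, ← Category.assoc, pullback.lift_fst, Category.id_comp, sub_self,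
        zero_comp]
    exact (cancel_mono _).1 h9
  have hςb : ς ≫ pullback.snd p t = j := by rw [hς, pullback.lift_snd]
  rw [← hςb, Category.assoc, hγ, hγ', Preadditive.comp_add, ← Category.assoc, hςσ, zero_comp,
    zero_add, hς, pullback.lift_fst]

end Infra2


section Infra3

variable {C : Type u} [Category.{v} C] [Abelian C]

theorem ses_mono_cokernel {A E : C} (φ : A ⟶ E) [Mono φ] : IsShortExact φ (cokernel.π φ) := by
  refine ses_mk_ker inferInstance inferInstance (cokernel.condition φ) ?_
  intro Z z hz
  have hlim := Abelian.monoIsKernelOfCokernel _ (cokernelIsCokernel φ)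
  obtain ⟨m, hm⟩ := KernelFork.IsLimit.lift' hlim z hz
  exact ⟨m, hm⟩

theorem epi_desc_of_kernel_comp_zero {E B Z : C} (p : E ⟶ B) [Epi p] (t : E ⟶ Z)
    (ht : kernel.ι p ≫ t = 0) : ∃ s : B ⟶ Z, p ≫ s = t := by
  have hse : IsShortExact (kernel.ι p) p := ses_mk_ker inferInstance inferInstance
    (kernel.condition p) (fun z hz => ⟨kernel.lift p z hz, kernel.lift_ι p z hz⟩)
  exact ses_desc hse t ht

/-- Pushing a short exact sequence `0 → A → E → B → 0` out along `g : A → X` and splitting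
the result (using `Ext¹(B, X) = 0`) produces an extension of `g` along `i`. -/
theorem ses_pushout_factor {A E B X : C} {i : A ⟶ E} {p : E ⟶ B} (h : IsShortExact i p)
    (g : A ⟶ X) (hsplit : Ext1ZeroIn (Set.univ : Set C) B X) : ∃ hm : E ⟶ X, i ≫ hm = g := by
  obtain ⟨d, hd, hinl⟩ := ses_pushout h g
  obtain ⟨ρ, hρ⟩ := hsplit _ trivial (pushout.inr i g) d hd
  refine ⟨pushout.inl i g ≫ ρ, ?_⟩
  rw [← Category.assoc, pushout.condition, Category.assoc, hρ, Category.comp_id]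

theorem ext1ZeroIn_ext_closed {Z A E0 X'' : C} {i0 : A ⟶ E0} {p0 : E0 ⟶ X''}
    (hse : IsShortExact i0 p0) (hA : Ext1ZeroIn (Set.univ : Set C) Z A)
    (hX : Ext1ZeroIn (Set.univ : Set C) Z X'') : Ext1ZeroIn (Set.univ : Set C) Z E0 := by
  intro E _ j q hjq
  refine key_retraction i0 p0 hse j q hjq hX ?_
  intro F i w hw
  obtain ⟨r, hr⟩ := hA F trivial i w hw
  exact ⟨r ≫ i0, by rw [← Category.assoc, hr, Category.id_comp]⟩

theorem ext1ZeroIn_summand {Z A X' : C} (hX : Ext1ZeroIn (Set.univ : Set C) Z X')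
    (s : A ⟶ X') (r : X' ⟶ A) (hsr : s ≫ r = 𝟙 A) : Ext1ZeroIn (Set.univ : Set C) Z A := by
  intro E _ i q hiq
  obtain ⟨hm, hh⟩ := ses_pushout_factor hiq s hX
  exact ⟨hm ≫ r, by rw [← Category.assoc, hh, hsr]⟩

end Infra3

section Implications

variable {C : Type u} [Category.{v} C] [Abelian C]

theorem a1_implies_a2 (T : Set C) (h : A1 T) : A2 T := by
  obtain ⟨V, hT, hUniv, hCoprod⟩ := h
  have hmem : ∀ A : C, A ∈ T ↔ Ext1ZeroIn Set.univ V A := by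
    intro A; rw [hT]; exact ⟨fun h => h.2, fun h => ⟨trivial, h⟩⟩
  refine ⟨?_, ?_, ?_⟩
  · -- special preenveloping
    intro M _
    obtain ⟨X, uu, -, -, ⟨J, hJ, P, κ, p, hP, hSES⟩, hΨ⟩ := hUniv M trivial
    have hXT : X ∈ T := by
      rw [hmem]
      intro E _ j q hjq
      exact key_retraction uu p hSES j q hjq (hCoprod J P κ hP)
        (fun F i w hw => hΨ F trivial i w hw)
    refine ⟨X, uu, ses_mono hSES, ⟨⟨hXT, ?_⟩, ?_⟩⟩
    · intro T' hT' g
      exact ses_pushout_factor hSES g (ext1ZeroIn_coprod hP ((hmem T').1 hT'))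
    · refine ⟨trivial, fun X' hX' => ?_⟩
      obtain ⟨e, he, hπe⟩ := ses_cokernel_iso hSES
      haveI := he
      exact ext1ZeroIn_iso e (ext1ZeroIn_coprod hP ((hmem X').1 hX'))
  · -- closed under extensions
    intro A E0 X' i0 p0 hse hA hX'
    rw [hmem]
    exact ext1ZeroIn_ext_closed hse ((hmem A).1 hA) ((hmem X').1 hX')
  · -- closed under direct summands
    intro A X' hX' s r hsr
    rw [hmem]
    exact ext1ZeroIn_summand ((hmem X').1 hX') s r hsr

theorem a2_implies_a3 (T : Set C) (h : A2 T) : A3 T := by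
  obtain ⟨hpre, hext, hsummand⟩ := h
  have hTchar : T = {A | A ∈ (Set.univ : Set C) ∧
      ∀ Z ∈ leftPerpSet (Set.univ : Set C) T, Ext1ZeroIn (Set.univ : Set C) Z A} := by
    apply Set.ext
    intro A
    constructor
    · exact fun hA => ⟨trivial, fun Z hZ => hZ.2 A hA⟩
    · rintro ⟨-, hA⟩
      obtain ⟨X, φ, hφmono, hφpre, hφcoker⟩ := hpre A trivial
      haveI := hφmono
      obtain ⟨r, hr⟩ := hA (cokernel φ) hφcoker X trivial φ (cokernel.π φ)
        (ses_mono_cokernel φ)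
      exact hsummand hφpre.mem φ r hr
  refine ⟨⟨hTchar, rfl⟩, ?_⟩
  intro A _
  obtain ⟨X, φ, hφmono, hφpre, hφcoker⟩ := hpre A trivial
  haveI := hφmono
  exact ⟨X, cokernel φ, φ, cokernel.π φ, hφpre.mem, hφcoker, ses_mono_cokernel φ⟩

theorem a3_implies_a2 (T : Set C) (h : A3 T) : A2 T := by
  obtain ⟨⟨hY, -⟩, hrc⟩ := h
  have hmemT : ∀ A : C, A ∈ T ↔
      ∀ Z ∈ leftPerpSet (Set.univ : Set C) T, Ext1ZeroIn (Set.univ : Set C) Z A := by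
    intro A
    constructor
    · intro hA Z hZ
      exact hZ.2 A hA
    · intro hA
      rw [hY]
      exact ⟨trivial, hA⟩
  refine ⟨?_, ?_, ?_⟩
  · -- special preenveloping
    intro M _
    obtain ⟨Y', X', i, p, hY', hX', hse⟩ := hrc M trivial
    refine ⟨Y', i, ses_mono hse, ⟨⟨hY', ?_⟩, ?_⟩⟩
    · intro T' hT' g
      exact ses_pushout_factor hse g (hX'.2 T' hT')
    · refine ⟨trivial, fun X'' hX'' => ?_⟩
      obtain ⟨e, he, hπe⟩ := ses_cokernel_iso hse
      haveI := he
      exact ext1ZeroIn_iso e (hX'.2 X'' hX'')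
  · -- closed under extensions
    intro A E0 X'' i0 p0 hse hA hX''
    rw [hmemT]
    intro Z hZ
    exact ext1ZeroIn_ext_closed hse (hZ.2 A hA) (hZ.2 X'' hX'')
  · -- closed under direct summands
    intro A X' hX' s r hsr
    rw [hmemT]
    intro Z hZ
    exact ext1ZeroIn_summand (hZ.2 X' hX') s r hsr

end Implications


section Coprod

variable {C : Type u} [Category.{v} C] [Abelian C]

/-- Subcoproducts of existing coproducts of copies of `G` exist (split off an idempotent). -/
theorem coprod_const_sub {I K : Type v} (f : K ↪ I) {G Q : C} {ι : ∀ _ : I, G ⟶ Q}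
    (h : IsCoproductIn (Set.univ : Set C) (fun _ : I => G) Q ι) :
    ∃ (Q' : C) (ι' : ∀ _ : K, G ⟶ Q'),
      IsCoproductIn (Set.univ : Set C) (fun _ : K => G) Q' ι' := by
  classical
  obtain ⟨e, he, -⟩ := h.desc Q trivial (fun i => if i ∈ Set.range f then ι i else 0)
  have he2 : e ≫ e = e := by
    refine coprod_uniq h (fun i => ?_)
    rw [← Category.assoc, he i]
    split_ifs with hmem
    · rw [he i, if_pos hmem]
    · rw [zero_comp]
  have hkcond : e ≫ (𝟙 Q - e) = 0 := by
    rw [Preadditive.comp_sub, Category.comp_id, he2, sub_self]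
  set S := kernel (𝟙 Q - e) with hS
  set ρ : Q ⟶ S := kernel.lift (𝟙 Q - e) e hkcond with hρ
  have hρι : ρ ≫ kernel.ι (𝟙 Q - e) = e := kernel.lift_ι _ _ _
  have hιe : kernel.ι (𝟙 Q - e) ≫ e = kernel.ι (𝟙 Q - e) := by
    have hc := kernel.condition (𝟙 Q - e)
    rw [Preadditive.comp_sub, Category.comp_id, sub_eq_zero] at hc
    exact hc.symm
  have hιρ : kernel.ι (𝟙 Q - e) ≫ ρ = 𝟙 S := by
    rw [← cancel_mono (kernel.ι (𝟙 Q - e)), Category.assoc, hρι, hιe, Category.id_comp]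
  refine ⟨S, fun k => ι (f k) ≫ ρ, fun _ => trivial, trivial, ?_⟩
  intro Z _ g
  obtain ⟨h₀, hh₀, -⟩ := h.desc Z trivial
    (fun i => if hmem : ∃ k, f k = i then g hmem.choose else 0)
  have hbase : ∀ k : K, ι (f k) ≫ h₀ = g k := by
    intro k
    rw [hh₀ (f k), dif_pos ⟨k, rfl⟩]
    congr 1
    exact f.injective (⟨k, rfl⟩ : ∃ k', f k' = f k).choose_spec
  have hρQ : ∀ i : I, i ∉ Set.range f → ι i ≫ ρ = 0 := by
    intro i hi
    rw [← cancel_mono (kernel.ι (𝟙 Q - e)), Category.assoc, hρι, he i, if_neg hi, zero_comp]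
  refine ⟨kernel.ι (𝟙 Q - e) ≫ h₀, fun k => ?_, ?_⟩
  · simp only [← Category.assoc]
    rw [Category.assoc (ι (f k)) ρ, hρι, he (f k), if_pos (Set.mem_range_self k), hbase k]
  · intro y hy
    haveI hepi : Epi ρ := by
      refine ⟨fun {Z'} w w' hww => ?_⟩
      rw [← Category.id_comp w, ← Category.id_comp w', ← hιρ, Category.assoc, Category.assoc,
        hww]
    rw [← cancel_epi ρ]
    refine coprod_uniq h (fun i => ?_)
    by_cases hmem : i ∈ Set.range f
    · obtain ⟨k, rfl⟩ := hmem
      simp only [← Category.assoc]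
      rw [hy k, Category.assoc (ι (f k)) ρ, hρι, he (f k), if_pos (Set.mem_range_self k),
        hbase k]
    · simp only [← Category.assoc]
      rw [hρQ i hmem]
      simp

/-- Finite coproducts of copies of `G` always exist. -/
theorem coprod_const_finite (K : Type v) [Finite K] (G : C) :
    ∃ (Q : C) (ι : ∀ _ : K, G ⟶ Q),
      IsCoproductIn (Set.univ : Set C) (fun _ : K => G) Q ι := by
  classical
  obtain ⟨n, ⟨e⟩⟩ := Finite.exists_equiv_fin K
  refine ⟨⨁ (fun _ : Fin n => G), fun k => biproduct.ι (fun _ : Fin n => G) (e k),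
    fun _ => trivial, trivial, ?_⟩
  intro Z _ g
  refine ⟨biproduct.desc (fun j => g (e.symm j)), fun k => ?_, fun y hy => ?_⟩
  · rw [biproduct.ι_desc, e.symm_apply_apply]
  · refine biproduct.hom_ext' _ _ (fun j => ?_)
    rw [biproduct.ι_desc]
    have := hy (e.symm j)
    rwa [e.apply_symm_apply] at this

/-- If coproducts `G^(S)` and `G^(I)` exist, then `G^(S × I)` exists. -/
theorem coprod_const_prod {S I : Type v} {G QS QI : C} {ιS : ∀ _ : S, G ⟶ QS}
    {ιI : ∀ _ : I, G ⟶ QI}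
    (hS : IsCoproductIn (Set.univ : Set C) (fun _ : S => G) QS ιS)
    (hI : IsCoproductIn (Set.univ : Set C) (fun _ : I => G) QI ιI) :
    ∃ (Q : C) (ι : ∀ _ : S × I, G ⟶ Q),
      IsCoproductIn (Set.univ : Set C) (fun _ : S × I => G) Q ι := by
  by_cases hfin : Finite (S × I)
  · exact coprod_const_finite _ G
  · haveI hinf : Infinite (S × I) := not_finite_iff_infinite.mp hfin
    rcases le_total (Cardinal.mk S) (Cardinal.mk I) with hle | hle
    · haveI : Infinite I := by
        by_contra hIfin
        haveI : Finite I := not_infinite_iff_finite.mp hIfin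
        haveI : Finite S := by
          have h1 : Cardinal.mk S < Cardinal.aleph0 :=
            lt_of_le_of_lt hle (Cardinal.lt_aleph0_of_finite I)
          exact Cardinal.lt_aleph0_iff_finite.mp h1
        exact hfin (Finite.instProd)
      have hcard : Cardinal.mk (S × I) ≤ Cardinal.mk I := by
        calc Cardinal.mk (S × I) = Cardinal.mk S * Cardinal.mk I := by
              rw [Cardinal.mk_prod, Cardinal.lift_id, Cardinal.lift_id]
          _ ≤ Cardinal.mk I * Cardinal.mk I := mul_le_mul' hle le_rfl
          _ = Cardinal.mk I := Cardinal.mul_eq_self (Cardinal.aleph0_le_mk I)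
      obtain ⟨emb⟩ := (Cardinal.le_def _ _).mp hcard
      exact coprod_const_sub emb hI
    · haveI : Infinite S := by
        by_contra hSfin
        haveI : Finite S := not_infinite_iff_finite.mp hSfin
        haveI : Finite I := by
          have h1 : Cardinal.mk I < Cardinal.aleph0 :=
            lt_of_le_of_lt hle (Cardinal.lt_aleph0_of_finite S)
          exact Cardinal.lt_aleph0_iff_finite.mp h1
        exact hfin (Finite.instProd)
      have hcard : Cardinal.mk (S × I) ≤ Cardinal.mk S := by
        calc Cardinal.mk (S × I) = Cardinal.mk S * Cardinal.mk I := by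
              rw [Cardinal.mk_prod, Cardinal.lift_id, Cardinal.lift_id]
          _ ≤ Cardinal.mk S * Cardinal.mk S := mul_le_mul' le_rfl hle
          _ = Cardinal.mk S := Cardinal.mul_eq_self (Cardinal.aleph0_le_mk S)
      obtain ⟨emb⟩ := (Cardinal.le_def _ _).mp hcard
      exact coprod_const_sub emb hS

/-- Extending a coproduct of copies of `G` by one more copy. -/
theorem coprod_const_option {I : Type v} {G Q : C} {ι : ∀ _ : I, G ⟶ Q}
    (h : IsCoproductIn (Set.univ : Set C) (fun _ : I => G) Q ι) :
    ∃ ι' : ∀ _ : Option I, G ⟶ Q ⊞ G,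
      IsCoproductIn (Set.univ : Set C) (fun _ : Option I => G) (Q ⊞ G) ι' := by
  refine ⟨fun o => Option.rec biprod.inr (fun i => ι i ≫ biprod.inl) o,
    fun _ => trivial, trivial, ?_⟩
  intro Z _ g
  obtain ⟨h₀, hh₀, -⟩ := h.desc Z trivial (fun i => g (some i))
  refine ⟨biprod.desc h₀ (g none), fun o => ?_, fun y hy => ?_⟩
  · cases o with
    | none => exact biprod.inr_desc _ _
    | some i =>
        have hgoal : (ι i ≫ biprod.inl) ≫ biprod.desc h₀ (g none) = g (some i) := by
          rw [Category.assoc, biprod.inl_desc, hh₀ i]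
        exact hgoal
  · apply biprod.hom_ext'
    · refine coprod_uniq h (fun i => ?_)
      have hsome : (ι i ≫ biprod.inl) ≫ y = g (some i) := hy (some i)
      rw [← Category.assoc, hsome, biprod.inl_desc, hh₀ i]
    · rw [biprod.inr_desc]
      exact hy none

/-- Grouping a coproduct over `S × I` into a coproduct over `I` of copies of `G^(S)`. -/
theorem coprod_group {S I : Type v} {G Q QS : C} {ι : ∀ _ : S × I, G ⟶ Q}
    {ιS : ∀ _ : S, G ⟶ QS}
    (h : IsCoproductIn (Set.univ : Set C) (fun _ : S × I => G) Q ι)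
    (hS : IsCoproductIn (Set.univ : Set C) (fun _ : S => G) QS ιS) :
    ∃ J : ∀ _ : I, QS ⟶ Q, IsCoproductIn (Set.univ : Set C) (fun _ : I => QS) Q J := by
  have hJ : ∀ i : I, ∃ Ji : QS ⟶ Q, ∀ s : S, ιS s ≫ Ji = ι (s, i) :=
    fun i => coprod_desc hS (fun s => ι (s, i))
  refine ⟨fun i => (hJ i).choose, fun _ => trivial, trivial, ?_⟩
  intro Z _ g
  obtain ⟨h₀, hh₀, -⟩ := h.desc Z trivial (fun si => ιS si.1 ≫ g si.2)
  refine ⟨h₀, fun i => ?_, fun y hy => ?_⟩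
  · refine coprod_uniq hS (fun s => ?_)
    rw [← Category.assoc, (hJ i).choose_spec s, hh₀ (s, i)]
  · refine coprod_uniq h (fun si => ?_)
    obtain ⟨s', i'⟩ := si
    rw [hh₀ (s', i'), ← (hJ i').choose_spec s', Category.assoc, hy i']

/-- Coproducts of copies of a cokernel, built out of coproducts of copies
of the two objects of a presentation. -/
theorem coprod_coker {I : Type v} {Gb Ga TG : C} (w : Gb ⟶ Ga) (εT : Ga ⟶ TG)
    (hwε : w ≫ εT = 0)
    (hcoker : ∀ {Z : C} (t : Ga ⟶ Z), w ≫ t = 0 → ∃! s : TG ⟶ Z, εT ≫ s = t)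
    {QA QB : C} {JA : ∀ _ : I, Ga ⟶ QA} {JB : ∀ _ : I, Gb ⟶ QB}
    (hA : IsCoproductIn (Set.univ : Set C) (fun _ : I => Ga) QA JA)
    (hB : IsCoproductIn (Set.univ : Set C) (fun _ : I => Gb) QB JB) :
    ∃ (wI : QB ⟶ QA) (TGI : C) (πI : QA ⟶ TGI) (κ : ∀ _ : I, TG ⟶ TGI),
      IsCoproductIn (Set.univ : Set C) (fun _ : I => TG) TGI κ ∧
      (∀ i, JB i ≫ wI = w ≫ JA i) ∧ (∀ i, JA i ≫ πI = εT ≫ κ i) ∧ Epi πI ∧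
      (∀ {Z : C} (t : QA ⟶ Z), wI ≫ t = 0 → ∃ s : TGI ⟶ Z, πI ≫ s = t) := by
  have hεuniq : ∀ {Z : C} (s₁ s₂ : TG ⟶ Z), εT ≫ s₁ = εT ≫ s₂ → s₁ = s₂ := by
    intro Z s₁ s₂ hs
    have hz : w ≫ εT ≫ s₂ = 0 := by rw [← Category.assoc, hwε, zero_comp]
    obtain ⟨s₀, -, huniq⟩ := hcoker (εT ≫ s₂) hz
    rw [huniq s₁ hs, huniq s₂ rfl]
  obtain ⟨wI, hwI, -⟩ := hB.desc QA trivial (fun i => w ≫ JA i)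
  set TGI := cokernel wI with hTGI
  set πI : QA ⟶ TGI := cokernel.π wI with hπI
  have hκ : ∀ i : I, ∃! κi : TG ⟶ TGI, εT ≫ κi = JA i ≫ πI := by
    intro i
    refine hcoker (JA i ≫ πI) ?_
    rw [← Category.assoc, ← hwI i, Category.assoc, hπI, cokernel.condition, comp_zero]
  refine ⟨wI, TGI, πI, fun i => (hκ i).exists.choose, ⟨fun _ => trivial, trivial, ?_⟩,
    hwI, fun i => ((hκ i).exists.choose_spec).symm, by rw [hπI]; infer_instance, ?_⟩
  · intro Z _ g
    obtain ⟨hq, hhq, -⟩ := hA.desc Z trivial (fun i => εT ≫ g i)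
    have hwIhq : wI ≫ hq = 0 := by
      refine coprod_uniq hB (fun i => ?_)
      rw [← Category.assoc, hwI i, Category.assoc, hhq i, ← Category.assoc, hwε, zero_comp,
        comp_zero]
    have hexs : ∃ s : TGI ⟶ Z, πI ≫ s = hq :=
      ⟨cokernel.desc wI hq hwIhq, by rw [hπI]; exact cokernel.π_desc wI hq hwIhq⟩
    obtain ⟨s, hs⟩ := hexs
    refine ⟨s, fun i => ?_, fun y hy => ?_⟩
    · refine hεuniq _ _ ?_
      rw [← Category.assoc, (hκ i).exists.choose_spec, Category.assoc, hs, hhq i]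
    · have hπy : πI ≫ y = hq := by
        refine coprod_uniq hA (fun i => ?_)
        rw [← Category.assoc, ← (hκ i).exists.choose_spec, Category.assoc, hy i, hhq i]
      haveI : Epi πI := by rw [hπI]; infer_instance
      rw [← cancel_epi πI, hπy, hs]
  · intro Z t ht
    exact ⟨cokernel.desc wI t ht, by rw [hπI, cokernel.π_desc]⟩

end Coprod


section MainConstruction

variable {C : Type u} [Category.{v} C] [Abelian C]

theorem a2_implies_a1 (T : Set C)
    (hG : ∃ G : C, IsEpiGeneratorIn Set.univ G)
    (hcop : ∀ (I : Type v) (g : I → C) (Q : C) (ι : ∀ i, g i ⟶ Q),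
        (∀ i, g i ∈ T) → IsCoproductIn Set.univ g Q ι → Q ∈ T)
    (hquot : ∀ ⦃A Q : C⦄, A ∈ T → ∀ p : A ⟶ Q, Epi p → Q ∈ T)
    (hA2 : A2 T) : A1 T := by
  classical
  obtain ⟨G, hGgen⟩ := hG
  obtain ⟨hpre, hext, hsummand⟩ := hA2
  -- a special preenvelope of the epi-generator
  obtain ⟨TG, lam, hlmono, hlpre, hlcoker⟩ := hpre G trivial
  haveI := hlmono
  have hQT : cokernel lam ∈ T := hquot hlpre.mem (cokernel.π lam) inferInstance
  have hQsplit : ∀ X' ∈ T, Ext1ZeroIn Set.univ (cokernel lam) X' :=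
    fun X' hX' => hlcoker.2 X' hX'
  -- a presentation of `TG` by coproducts of copies of `G`
  obtain ⟨a, Ga, ιa, hcoa, εT, hεT⟩ := hGgen.2 TG trivial
  haveI := hεT
  obtain ⟨b, Gb, ιb, hcob, εK, hεK⟩ := hGgen.2 (kernel εT) trivial
  haveI := hεK
  have hwε : (εK ≫ kernel.ι εT) ≫ εT = 0 := by
    rw [Category.assoc, kernel.condition, comp_zero]
  have hcoker : ∀ {Z : C} (t : Ga ⟶ Z), (εK ≫ kernel.ι εT) ≫ t = 0 →
      ∃! s : TG ⟶ Z, εT ≫ s = t := by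
    intro Z t ht
    rw [Category.assoc] at ht
    have ht2 : kernel.ι εT ≫ t = 0 := (cancel_epi εK).1 (by rw [comp_zero]; exact ht)
    obtain ⟨s, hs⟩ := epi_desc_of_kernel_comp_zero εT t ht2
    exact ⟨s, hs, fun y hy => by rw [← cancel_epi εT, hy, hs]⟩
  have hcoker2 : ∀ {Z : C} (t : TG ⟶ Z), lam ≫ t = 0 →
      ∃! s : cokernel lam ⟶ Z, cokernel.π lam ≫ s = t := by
    intro Z t ht
    refine ⟨cokernel.desc lam t ht, cokernel.π_desc lam t ht, fun y hy => ?_⟩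
    rw [← cancel_epi (cokernel.π lam), hy, cokernel.π_desc]
  -- the per-object construction of the universal extension
  have main : ∀ A : C, ∃ (J : Type v) (_ : Nonempty J) (P : C)
      (κQ : ∀ _ : J, cokernel lam ⟶ P) (X : C) (uu : A ⟶ X) (pp : X ⟶ P),
      IsCoproductIn Set.univ (fun _ : J => cokernel lam) P κQ ∧ IsShortExact uu pp ∧
        X ∈ T := by
    intro A
    obtain ⟨I₀, QI₀, ι₀, hco₀, ε₀, hε₀⟩ := hGgen.2 A trivial
    haveI := hε₀
    obtain ⟨ι₁, hco₁⟩ := coprod_const_option hco₀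
    haveI hεepi : Epi (biprod.desc ε₀ (0 : G ⟶ A)) := epi_of_epi_fac (biprod.inl_desc ε₀ 0)
    -- coproducts of copies of `Ga`, `Gb` indexed by `Option I₀`
    obtain ⟨Qa, ιai, hcoai⟩ := coprod_const_prod hcoa hco₁
    obtain ⟨Qb, ιbi, hcobi⟩ := coprod_const_prod hcob hco₁
    obtain ⟨JA, hJA⟩ := coprod_group hcoai hcoa
    obtain ⟨JB, hJB⟩ := coprod_group hcobi hcob
    -- a coproduct of copies of `TG`
    obtain ⟨wI, TGI, πI, κ, hκ, hJBw, hJAπ, hπepi, hdesc⟩ :=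
      coprod_coker (εK ≫ kernel.ι εT) εT hwε hcoker hJA hJB
    -- a coproduct of copies of `cokernel lam`
    obtain ⟨lamI, QI, πQ, κQ, hκQ, hlamrel, hπrel, hπQepi, hdescQ⟩ :=
      coprod_coker lam (cokernel.π lam) (cokernel.condition lam) hcoker2 hκ hco₁
    -- `lamI` is mono, via a special preenvelope of the coproduct `G^(Option I₀)`
    obtain ⟨T', ν, hνmono, hνpre, -⟩ := hpre (QI₀ ⊞ G) trivial
    have htstar : ∀ i : Option I₀, ∃ ti : TG ⟶ T', lam ≫ ti = ι₁ i ≫ ν :=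
      fun i => hlpre.fac T' hνpre.mem (ι₁ i ≫ ν)
    obtain ⟨tst, htst⟩ := coprod_desc hκ (fun i => (htstar i).choose)
    have hlamnu : lamI ≫ tst = ν := by
      refine coprod_uniq hco₁ (fun i => ?_)
      rw [← Category.assoc, hlamrel i, Category.assoc, htst i, (htstar i).choose_spec]
    haveI hlammono : Mono lamI := by
      haveI h' : Mono (lamI ≫ tst) := by rw [hlamnu]; exact hνmono
      exact mono_of_mono lamI tst
    haveI := hπQepi
    have hlampiQ : lamI ≫ πQ = 0 := by
      refine coprod_uniq hco₁ (fun i => ?_)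
      rw [← Category.assoc, hlamrel i, Category.assoc, hπrel i, ← Category.assoc,
        cokernel.condition, zero_comp, comp_zero]
    have hcond : biprod.desc ε₀ (0 : G ⟶ A) ≫ (0 : A ⟶ QI) = lamI ≫ πQ := by
      rw [comp_zero, hlampiQ]
    refine ⟨Option I₀, ⟨none⟩, QI, κQ, pushout (biprod.desc ε₀ (0 : G ⟶ A)) lamI,
      pushout.inl _ _, pushout.desc 0 πQ hcond, hκQ, ?_, ?_⟩
    · refine ses_mk_coker inferInstance (epi_of_epi_fac (pushout.inr_desc 0 πQ hcond))
        (pushout.inl_desc _ _ _) ?_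
      intro Z t ht
      have hlamt : lamI ≫ pushout.inr (biprod.desc ε₀ (0 : G ⟶ A)) lamI ≫ t = 0 := by
        rw [← Category.assoc, ← pushout.condition, Category.assoc, ht, comp_zero]
      obtain ⟨s, hs⟩ := hdescQ (pushout.inr (biprod.desc ε₀ (0 : G ⟶ A)) lamI ≫ t) hlamt
      refine ⟨s, ?_⟩
      apply pushout.hom_ext
      · rw [← Category.assoc, pushout.inl_desc, zero_comp, ht]
      · rw [← Category.assoc, pushout.inr_desc, hs]
    · have hTGI_T : TGI ∈ T := hcop _ (fun _ : Option I₀ => TG) TGI κ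
        (fun _ => hlpre.mem) hκ
      exact hquot hTGI_T (pushout.inr (biprod.desc ε₀ (0 : G ⟶ A)) lamI) inferInstance
  -- assembling condition (1)
  refine ⟨cokernel lam, ?_, ?_, ?_⟩
  · apply Set.ext
    intro A
    constructor
    · exact fun hA => ⟨trivial, hQsplit A hA⟩
    · rintro ⟨-, hQA⟩
      obtain ⟨J, hJ, P, κQ, X, uu, pp, hcoP, hse, hXT⟩ := main A
      obtain ⟨r, hr⟩ := ext1ZeroIn_coprod hcoP hQA X trivial uu pp hse
      exact hsummand hXT uu r hr
  · intro A _
    obtain ⟨J, hJ, P, κQ, X, uu, pp, hcoP, hse, hXT⟩ := main A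
    refine ⟨X, uu, trivial, trivial, ⟨J, hJ, P, κQ, pp, hcoP, hse⟩, ?_⟩
    intro E _ i q hiq
    exact ses_pushout_factor hiq uu (hQsplit X hXT)
  · intro I P κ hco
    exact hQsplit P (hcop I (fun _ => cokernel lam) P κ (fun _ => hQT) hco)

end MainConstruction

theorem statement1 (T : Set C) :
    ((A1 T → A2 T) ∧ (A2 T ↔ A3 T)) ∧
    -- If `𝒜` has an epi-generator and `𝒯` is closed under coproducts and quotients,
    -- then all three assertions are equivalent:
    ((∃ G : C, IsEpiGeneratorIn Set.univ G) →
     (∀ (I : Type v) (g : I → C) (Q : C) (ι : ∀ i, g i ⟶ Q),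
        (∀ i, g i ∈ T) → IsCoproductIn Set.univ g Q ι → Q ∈ T) →
     (∀ ⦃A Q : C⦄, A ∈ T → ∀ p : A ⟶ Q, Epi p → Q ∈ T) →
     (A2 T → A1 T)) := by
  refine ⟨⟨a1_implies_a2 T, a2_implies_a3 T, a3_implies_a2 T⟩, ?_⟩
  intro hG hcop hquot hA2
  exact a2_implies_a1 T hG hcop hquot hA2

end Stmt1
end

section
/- Let 𝒜 be an abelian category that is either Ext^1-small and (Ab.4), or Hom-finite and Ext^1-finite. For an object V of 𝒜 the following are equivalent: (1) V is a tilting object; (2) Gen(V) = V^{⊥1}; (3) V has projective dimension ≤ 1, Ext^1(V, V^{(I)}) = 0 for all sets I for which the coproduct exists (in the Hom-finite case the single condition Ext^1(V,V) = 0 suffices), and the only object A with Hom(V,A) = 0 = Ext^1(V,A) is A = 0. -/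
/-!
Common definitions for formalizing results of "Tilting preenvelopes and cotilting
precovers in general Abelian categories" (Parra–Saorín–Virili).

Conventions:
* Full subcategories of an abelian category `C` are encoded as `Set C`.
* "Sets" (index sets of families, coproducts, …) are encoded as types in the universe `v`
  of the morphisms of `C`.
* `Ext¹(X,Y) = 0` is encoded via the splitting of all short exact sequences
  `0 → Y → E → X → 0` (equivalently, the vanishing of the Yoneda Ext group).
* Relative (`…In B`) notions encode the corresponding notion computed inside the
  full (abelian exact) subcategory determined by `B : Set C`; the ambient case is
  `B = Set.univ`.
* Coproducts are not assumed to exist: a coproduct of a family existing in the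
  (sub)category is encoded by a cocone with the universal property (`IsCoproductIn`).
-/

open CategoryTheory CategoryTheory.Limits

universe w v u

attribute [local instance] CategoryTheory.Abelian.hasFiniteBiproducts

/-! ## Auxiliary development for the proof of Statement 6 -/

section Helpers

open CategoryTheory CategoryTheory.Limits CategoryTheory.Abelian CategoryTheory.Preadditive
open scoped Pseudoelement

namespace Paper

section


variable {C : Type u} [Category.{v} C] [Abelian C]

section SesAPI

variable {A E B T Z : C}

lemma isShortExact_mk {i : A ⟶ E} {p : E ⟶ B} (hw : i ≫ p = 0) (hm : Mono i) (he : Epi p)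
    (hex : (ShortComplex.mk i p hw).Exact) : IsShortExact i p :=
  ⟨hw, ShortComplex.ShortExact.mk' hex hm he⟩

namespace IsShortExact

variable {i : A ⟶ E} {p : E ⟶ B}

lemma w (h : IsShortExact i p) : i ≫ p = 0 := h.choose

lemma shortExact (h : IsShortExact i p) : (ShortComplex.mk i p h.w).ShortExact :=
  h.choose_spec

lemma mono (h : IsShortExact i p) : Mono i := h.shortExact.mono_f

lemma epi (h : IsShortExact i p) : Epi p := h.shortExact.epi_g

lemma exact (h : IsShortExact i p) : (ShortComplex.mk i p h.w).Exact := h.shortExact.exact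

lemma lift (h : IsShortExact i p) (k : T ⟶ E) (hk : k ≫ p = 0) : ∃ l : T ⟶ A, l ≫ i = k := by
  have := h.mono
  exact h.exact.lift' k hk

lemma desc (h : IsShortExact i p) (k : E ⟶ T) (hk : i ≫ k = 0) : ∃ l : B ⟶ T, p ≫ l = k := by
  have := h.epi
  exact h.exact.desc' k hk

/-- pseudoelement exactness -/
lemma pexact (h : IsShortExact i p) (b : (E : Type (max u v))) (hb : p b = 0) :
    ∃ a : (A : Type (max u v)), i a = b :=
  Pseudoelement.pseudo_exact_of_exact h.exact b hb

/-- a retraction gives a section -/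
lemma sectionOfRetraction (h : IsShortExact i p) (r : E ⟶ A) (hr : i ≫ r = 𝟙 A) :
    ∃ s : B ⟶ E, s ≫ p = 𝟙 B := by
  obtain ⟨l, hl⟩ := h.desc (𝟙 E - r ≫ i) (by simp [comp_sub, reassoc_of% hr])
  refine ⟨l, ?_⟩
  have := h.epi
  rw [← cancel_epi p, ← Category.assoc, hl]
  simp [sub_comp, Category.assoc, h.w]

end IsShortExact

lemma kernel_isShortExact {X Y : C} (f : X ⟶ Y) (hf : Epi f) :
    IsShortExact (kernel.ι f) f :=
  isShortExact_mk (kernel.condition f) inferInstance hf (ShortComplex.exact_kernel f)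

lemma cokernel_isShortExact {X Y : C} (f : X ⟶ Y) (hf : Mono f) :
    IsShortExact f (cokernel.π f) :=
  isShortExact_mk (cokernel.condition f) hf inferInstance (ShortComplex.exact_cokernel f)

/-- membership in the image, detected by the cokernel -/
lemma pseudo_im_iff {X Y : C} (f : X ⟶ Y) (y : (Y : Type (max u v))) :
    (∃ x : (X : Type (max u v)), f x = y) ↔ (cokernel.π f) y = 0 := by
  constructor
  · rintro ⟨x, rfl⟩
    rw [← Pseudoelement.comp_apply, cokernel.condition, Pseudoelement.zero_apply]
  · intro hy
    exact Pseudoelement.pseudo_exact_of_exact (ShortComplex.exact_cokernel f) y hy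


lemma show_aux1 {A E X Z : C} (i : A ⟶ E) (f : A ⟶ X) (t : pushout i f ⟶ Z)
    (ht : pushout.inr i f ≫ t = 0) : i ≫ pushout.inl i f ≫ t = 0 := by
  rw [pushout.condition_assoc, ht, comp_zero]

lemma show_aux2 {E B Z T : C} (p : E ⟶ B) (t : Z ⟶ B) (s : T ⟶ pullback p t)
    (hs : s ≫ pullback.snd p t = 0) : (s ≫ pullback.fst p t) ≫ p = 0 := by
  rw [Category.assoc, pullback.condition, ← Category.assoc, hs, zero_comp]

/-- Pushout of a short exact sequence along `f : A ⟶ X`. -/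
lemma ses_pushout {A E B X : C} {i : A ⟶ E} {p : E ⟶ B} (h : IsShortExact i p) (f : A ⟶ X) :
    ∃ (E' : C) (i' : X ⟶ E') (p' : E' ⟶ B) (g : E ⟶ E'),
      IsShortExact i' p' ∧ i ≫ g = f ≫ i' ∧ g ≫ p' = p ∧
      (∀ {Z : C} (α : E ⟶ Z) (β : X ⟶ Z), i ≫ α = f ≫ β →
        ∃ γ : E' ⟶ Z, g ≫ γ = α ∧ i' ≫ γ = β) ∧
      (∀ {Z : C} (γ₁ γ₂ : E' ⟶ Z), g ≫ γ₁ = g ≫ γ₂ → i' ≫ γ₁ = i' ≫ γ₂ → γ₁ = γ₂) := by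
  have hm := h.mono
  have hpe := h.epi
  have hx := h.exact
  have hw : i ≫ p = f ≫ 0 := by rw [h.w, comp_zero]
  set p' : pushout i f ⟶ B := pushout.desc p 0 hw with hp'def
  have hinl : pushout.inl i f ≫ p' = p := pushout.inl_desc _ _ _
  have hinr : pushout.inr i f ≫ p' = 0 := pushout.inr_desc _ _ _
  have hepi : Epi p' := epi_of_epi_fac hinl
  refine ⟨pushout i f, pushout.inr i f, p', pushout.inl i f, ?_, pushout.condition, hinl, ?_, ?_⟩
  · refine isShortExact_mk hinr inferInstance hepi ?_
    apply ShortComplex.exact_of_g_is_cokernel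
    refine CokernelCofork.IsColimit.ofπ _ _
      (fun {Z} t ht => hx.desc (pushout.inl i f ≫ t) (show_aux1 i f t ht))
      (fun {Z} t ht => ?_) (fun {Z} t ht m hm' => ?_)
    · apply pushout.hom_ext
      · rw [reassoc_of% hinl]
        exact hx.g_desc (pushout.inl i f ≫ t) (show_aux1 i f t ht)
      · rw [reassoc_of% hinr, zero_comp, ht]
    · have : Epi p' := hepi
      rw [← cancel_epi p', hm']
      apply pushout.hom_ext
      · rw [reassoc_of% hinl]
        exact (hx.g_desc (pushout.inl i f ≫ t) (show_aux1 i f t ht)).symm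
      · rw [reassoc_of% hinr, zero_comp, ht]
  · intro Z α β hc
    exact ⟨pushout.desc α β hc, pushout.inl_desc _ _ _, pushout.inr_desc _ _ _⟩
  · intro Z γ₁ γ₂ h1 h2
    exact pushout.hom_ext h1 h2

/-- Pullback of a short exact sequence along `t : Z ⟶ B`. -/
lemma ses_pullback {A E B Z : C} {i : A ⟶ E} {p : E ⟶ B} (h : IsShortExact i p) (t : Z ⟶ B) :
    ∃ (W : C) (i' : A ⟶ W) (p' : W ⟶ Z) (g : W ⟶ E),
      IsShortExact i' p' ∧ i' ≫ g = i ∧ g ≫ p = p' ≫ t ∧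
      (∀ {T : C} (α : T ⟶ E) (β : T ⟶ Z), α ≫ p = β ≫ t →
        ∃ γ : T ⟶ W, γ ≫ g = α ∧ γ ≫ p' = β) ∧
      (∀ {T : C} (γ₁ γ₂ : T ⟶ W), γ₁ ≫ g = γ₂ ≫ g → γ₁ ≫ p' = γ₂ ≫ p' → γ₁ = γ₂) := by
  have hpe := h.epi
  have hpm := h.mono
  have hx := h.exact
  have hw : i ≫ p = 0 ≫ t := by rw [h.w, zero_comp]
  set i' : A ⟶ pullback p t := pullback.lift i 0 hw with hi'def
  have hfst : i' ≫ pullback.fst p t = i := pullback.lift_fst _ _ _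
  have hsnd : i' ≫ pullback.snd p t = 0 := pullback.lift_snd _ _ _
  have hmono : Mono i' := mono_of_mono_fac hfst
  refine ⟨pullback p t, i', pullback.snd p t, pullback.fst p t, ?_, hfst,
    pullback.condition, ?_, ?_⟩
  · refine isShortExact_mk hsnd hmono inferInstance ?_
    apply ShortComplex.exact_of_f_is_kernel
    refine KernelFork.IsLimit.ofι _ _
      (fun {T} s hs => hx.lift (s ≫ pullback.fst p t) (show_aux2 p t s hs))
      (fun {T} s hs => ?_) (fun {T} s hs m hm' => ?_)
    · apply pullback.hom_ext
      · rw [Category.assoc, hfst]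
        exact hx.lift_f (s ≫ pullback.fst p t) (show_aux2 p t s hs)
      · rw [Category.assoc, hsnd, comp_zero, hs]
    · have : Mono i' := hmono
      rw [← cancel_mono i', hm']
      apply pullback.hom_ext
      · rw [Category.assoc, hfst]
        exact (hx.lift_f (s ≫ pullback.fst p t) (show_aux2 p t s hs)).symm
      · rw [Category.assoc, hsnd, comp_zero, hs]
  · intro T α β hc
    exact ⟨pullback.lift α β hc, pullback.lift_fst _ _ _, pullback.lift_snd _ _ _⟩
  · intro T γ₁ γ₂ h1 h2
    exact pullback.hom_ext h1 h2

end SesAPI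


end

section


variable {C : Type u} [Category.{v} C] [Abelian C]

/-! ### Ext1Zero basic API -/

lemma Ext1Zero.split {V A : C} (h : Ext1Zero V A) {E : C} {i : A ⟶ E} {p : E ⟶ V}
    (hse : IsShortExact i p) : ∃ r : E ⟶ A, i ≫ r = 𝟙 A :=
  h E (Set.mem_univ E) i p hse

lemma ext1Zero_intro {V A : C}
    (h : ∀ (E : C) (i : A ⟶ E) (p : E ⟶ V), IsShortExact i p → ∃ r : E ⟶ A, i ≫ r = 𝟙 A) :
    Ext1Zero V A := fun E _ i p hse => h E i p hse

/-- closure of `Ext¹(V,-) = 0` under retracts -/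
lemma Ext1Zero.ofRetract {V A Q : C} (hQ : Ext1Zero V Q) (s : A ⟶ Q) (r : Q ⟶ A)
    (hsr : s ≫ r = 𝟙 A) : Ext1Zero V A := by
  apply ext1Zero_intro
  intro E i p hse
  obtain ⟨E', i', p', g, hse', hcomm, hgp, -, -⟩ := ses_pushout hse s
  obtain ⟨ρ, hρ⟩ := hQ.split hse'
  refine ⟨g ≫ ρ ≫ r, ?_⟩
  rw [← Category.assoc, hcomm, Category.assoc, ← Category.assoc i' ρ r, hρ,
    Category.id_comp, hsr]

lemma Ext1Zero.ofIso {V A Q : C} (hQ : Ext1Zero V Q) (e : A ≅ Q) : Ext1Zero V A :=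
  hQ.ofRetract e.hom e.inv e.hom_inv_id

/-! ### Five lemma for ladders of short exact sequences -/

lemma ses_ladder_isIso {A E₁ E₂ B : C} {i₁ : A ⟶ E₁} {p₁ : E₁ ⟶ B} {i₂ : A ⟶ E₂} {p₂ : E₂ ⟶ B}
    (h₁ : IsShortExact i₁ p₁) (h₂ : IsShortExact i₂ p₂) (φ : E₁ ⟶ E₂)
    (hi : i₁ ≫ φ = i₂) (hp : φ ≫ p₂ = p₁) : IsIso φ := by
  have hm₁ := h₁.mono
  have hm₂ := h₂.mono
  have he₁ := h₁.epi
  have he₂ := h₂.epi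
  have hid₁ : Mono (𝟙 A) := inferInstance
  have hid₂ : Mono (𝟙 B) := inferInstance
  have hid₃ : Epi (𝟙 A) := inferInstance
  have hid₄ : Epi (𝟙 B) := inferInstance
  have hmono : Mono φ :=
    ShortComplex.mono_τ₂_of_exact_of_mono
      (S₁ := ShortComplex.mk i₁ p₁ h₁.w) (S₂ := ShortComplex.mk i₂ p₂ h₂.w)
      ⟨𝟙 A, φ, 𝟙 B, by simp [hi], by simp [hp]⟩ h₁.exact
  have hepi : Epi φ :=
    ShortComplex.epi_τ₂_of_exact_of_epi
      (S₁ := ShortComplex.mk i₁ p₁ h₁.w) (S₂ := ShortComplex.mk i₂ p₂ h₂.w)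
      ⟨𝟙 A, φ, 𝟙 B, by simp [hi], by simp [hp]⟩ h₂.exact
  exact isIso_of_mono_of_epi φ

/-! ### The main homological chase lemmas -/

/-- If `0 → K → X → A → 0` is exact with `Ext¹(V,X) = 0` and `Ext²(V,K) = 0`,
then `Ext¹(V,A) = 0`. -/
lemma ext1Zero_of_epi_of_ext2 {V K X A : C} {k : K ⟶ X} {π : X ⟶ A}
    (hse : IsShortExact k π) (hX : Ext1Zero V X) (hK : Ext2Zero V K) : Ext1Zero V A := by
  apply ext1Zero_intro
  intro E i q hq
  have hmi := hq.mono
  have hei := hq.epi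
  have hmk := hse.mono
  have heπ := hse.epi
  have w1 : k ≫ π ≫ i = 0 := by rw [← Category.assoc, hse.w, zero_comp]
  have w2 : (π ≫ i) ≫ q = 0 := by rw [Category.assoc, hq.w, comp_zero]
  have exact1 : (ShortComplex.mk k (π ≫ i) w1).Exact := by
    apply Pseudoelement.exact_of_pseudo_exact
    intro b hb
    rw [Pseudoelement.comp_apply] at hb
    have hπb : π b = 0 :=
      Pseudoelement.zero_of_map_zero i (Pseudoelement.pseudo_injective_of_mono i) _ hb
    exact hse.pexact b hπb
  have exact2 : (ShortComplex.mk (π ≫ i) q w2).Exact := by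
    apply Pseudoelement.exact_of_pseudo_exact
    intro e he
    obtain ⟨a, ha⟩ := hq.pexact e he
    obtain ⟨x, hx⟩ := Pseudoelement.pseudo_surjective_of_epi π a
    exact ⟨x, by rw [Pseudoelement.comp_apply, hx, ha]⟩
  obtain ⟨Y, a, b, hYse, φ, hgφ, hφb⟩ := hK X E k (π ≫ i) q w1 w2 hmk hei exact1 exact2
  have hma := hYse.mono
  have hmb := hYse.epi
  -- `0 → X → Y → V → 0` with maps `φ` and `b ≫ q`
  have hφmono : Mono φ := by
    apply Pseudoelement.mono_of_zero_of_map_zero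
    intro x hx
    have h1 : i (π x) = 0 := by
      have : b (φ x) = 0 := by rw [hx, Pseudoelement.apply_zero]
      rwa [← Pseudoelement.comp_apply, hφb, Pseudoelement.comp_apply] at this
    have h2 : π x = 0 :=
      Pseudoelement.zero_of_map_zero i (Pseudoelement.pseudo_injective_of_mono i) _ h1
    obtain ⟨x', hx'⟩ := hse.pexact x h2
    have h3 : a x' = 0 := by
      rw [← hgφ, Pseudoelement.comp_apply, hx', hx]
    have h4 : x' = 0 :=
      Pseudoelement.zero_of_map_zero a (Pseudoelement.pseudo_injective_of_mono a) _ h3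
    rw [← hx', h4, Pseudoelement.apply_zero]
  have w3 : φ ≫ b ≫ q = 0 := by rw [← Category.assoc, hφb, w2]
  have hbq : Epi (b ≫ q) := epi_comp b q
  have exact3 : (ShortComplex.mk φ (b ≫ q) w3).Exact := by
    apply Pseudoelement.exact_of_pseudo_exact
    intro y hy
    rw [Pseudoelement.comp_apply] at hy
    obtain ⟨a₀, ha₀⟩ := hq.pexact (b y) hy
    obtain ⟨x, hx⟩ := Pseudoelement.pseudo_surjective_of_epi π a₀
    have heq : b y = b (φ x) := by
      rw [← Pseudoelement.comp_apply, hφb, Pseudoelement.comp_apply, hx, ha₀]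
    obtain ⟨z, hz0, hzy⟩ := Pseudoelement.sub_of_eq_image b y (φ x) heq
    -- z lies in the image of a = k ≫ φ, hence of φ
    obtain ⟨t, ht⟩ := hYse.pexact z hz0
    have hcco : φ ≫ cokernel.π φ = 0 := cokernel.condition φ
    set c := cokernel.π φ with hc
    have hcz : c z = 0 := by
      rw [← ht, ← hgφ, Pseudoelement.comp_apply, ← Pseudoelement.comp_apply φ c,
        cokernel.condition, Pseudoelement.zero_apply]
    have hcφx : c (φ x) = 0 := by
      rw [← Pseudoelement.comp_apply, cokernel.condition, Pseudoelement.zero_apply]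
    have hcy : c y = 0 := by rw [← hzy _ c hcφx, hcz]
    exact (pseudo_im_iff φ y).2 hcy
  have hXYse : IsShortExact φ (b ≫ q) := isShortExact_mk w3 hφmono hbq exact3
  obtain ⟨σ, hσ⟩ := hX.split hXYse
  have haσ : a ≫ σ ≫ π = 0 := by
    rw [← hgφ, Category.assoc, ← Category.assoc φ, hσ, Category.id_comp, hse.w]
  obtain ⟨r, hr⟩ := hYse.desc (σ ≫ π) haσ
  refine ⟨r, ?_⟩
  rw [← cancel_epi π, ← Category.assoc, ← hφb, Category.assoc, hr, ← Category.assoc, hσ,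
    Category.id_comp, Category.comp_id]

/-- If `0 → K → Q → A → 0` is exact, `Ext¹(V,Q) = 0`, and every `V ⟶ A` factors
through the epimorphism, then `Ext¹(V,K) = 0`. -/
lemma ext1Zero_kernel_of_fac {V K Q A : C} {k : K ⟶ Q} {u : Q ⟶ A}
    (hse : IsShortExact k u) (hQ : Ext1Zero V Q)
    (hfac : ∀ f : V ⟶ A, ∃ f' : V ⟶ Q, f' ≫ u = f) : Ext1Zero V K := by
  apply ext1Zero_intro
  intro E' κ q' hκ
  obtain ⟨D, k', q'', wD, hDse, hcomm, hwD, -, -⟩ := ses_pushout hκ k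
  -- hcomm : κ ≫ wD = k ≫ k', hwD : wD ≫ q'' = q'
  obtain ⟨ρ, hρ⟩ := hQ.split hDse
  set t : E' ⟶ Q := wD ≫ ρ with htdef
  have hκt : κ ≫ t = k := by
    rw [htdef, ← Category.assoc, hcomm, Category.assoc, hρ, Category.comp_id]
  have h1 : κ ≫ t ≫ u = 0 := by rw [← Category.assoc, hκt, hse.w]
  obtain ⟨f₁, hf₁⟩ := hκ.desc (t ≫ u) h1
  obtain ⟨f₁', hf₁'⟩ := hfac f₁
  have h2 : (t - q' ≫ f₁') ≫ u = 0 := by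
    rw [sub_comp, Category.assoc q' f₁' u, hf₁', hf₁, sub_self]
  obtain ⟨r, hr⟩ := hse.lift (t - q' ≫ f₁') h2
  refine ⟨r, ?_⟩
  have := hse.mono
  rw [← cancel_mono k, Category.assoc, hr, comp_sub, hκt, ← Category.assoc, hκ.w, zero_comp,
    sub_zero, Category.id_comp]

/-- Quotient of a tower of monos: from `0 → A → X₁ → M → 0` and `0 → X₁ → U → P → 0`
get `0 → M → U/A → P → 0`. -/
lemma ses_quotient {A X1 U M P : C} {g : A ⟶ X1} {h : X1 ⟶ M} {v : X1 ⟶ U} {π : U ⟶ P}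
    (h₁ : IsShortExact g h) (h₂ : IsShortExact v π) :
    ∃ (U' : C) (c : U ⟶ U') (w' : M ⟶ U') (π' : U' ⟶ P),
      IsShortExact w' π' ∧ Epi c ∧ v ≫ c = h ≫ w' ∧ c ≫ π' = π := by
  have hmg := h₁.mono
  have hmv := h₂.mono
  have hmgv : Mono (g ≫ v) := mono_comp g v
  set c := cokernel.π (g ≫ v) with hcdef
  have hse0 : IsShortExact (g ≫ v) c := cokernel_isShortExact _ hmgv
  have hgvc : g ≫ v ≫ c = 0 := by rw [← Category.assoc]; exact hse0.w
  obtain ⟨w', hw'⟩ := h₁.desc (v ≫ c) hgvc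
  have hππ : (g ≫ v) ≫ π = 0 := by rw [Category.assoc, h₂.w, comp_zero]
  set π' := cokernel.desc (g ≫ v) π hππ with hπ'def
  have hcπ' : c ≫ π' = π := cokernel.π_desc _ _ _
  have hepc : Epi c := hse0.epi
  have heph := h₁.epi
  have hepπ := h₂.epi
  have hmw' : Mono w' := by
    apply Pseudoelement.mono_of_zero_of_map_zero
    intro m hm
    obtain ⟨x, hx⟩ := Pseudoelement.pseudo_surjective_of_epi h m
    have h3 : c (v x) = 0 := by
      rw [← Pseudoelement.comp_apply, ← hw', Pseudoelement.comp_apply, hx, hm]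
    obtain ⟨a, ha⟩ := hse0.pexact (v x) h3
    rw [Pseudoelement.comp_apply] at ha
    have hxa : x = g a :=
      Pseudoelement.pseudo_injective_of_mono v (by rw [← ha])
    rw [← hx, hxa, ← Pseudoelement.comp_apply, h₁.w, Pseudoelement.zero_apply]
  have hepπ' : Epi π' := epi_of_epi_fac hcπ'
  have hw'0 : w' ≫ π' = 0 := by
    rw [← cancel_epi h, ← Category.assoc, hw', Category.assoc, hcπ', h₂.w, comp_zero]
  have hex : (ShortComplex.mk w' π' hw'0).Exact := by
    apply Pseudoelement.exact_of_pseudo_exact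
    intro y hy
    obtain ⟨uu, huu⟩ := Pseudoelement.pseudo_surjective_of_epi c y
    have hπuu : π uu = 0 := by
      rw [← hcπ', Pseudoelement.comp_apply, huu, hy]
    obtain ⟨x, hx⟩ := h₂.pexact uu hπuu
    refine ⟨h x, ?_⟩
    rw [← Pseudoelement.comp_apply, hw', Pseudoelement.comp_apply, hx, huu]
  exact ⟨cokernel (g ≫ v), c, w', π', isShortExact_mk hw'0 hmw' hepπ' hex, hepc, hw'.symm, hcπ'⟩


end

section


variable {C : Type u} [Category.{v} C] [Abelian C]

/-! ### Coproduct infrastructure -/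

lemma isCoproductIn_self (V : C) :
    IsCoproductIn (Set.univ : Set C) (fun _ : PUnit.{v + 1} => V) V (fun _ => 𝟙 V) where
  mem _ := trivial
  memQ := trivial
  desc Z _ g :=
    ⟨g ⟨⟩, fun i => by cases i; simp, fun y hy => by simpa using (hy ⟨⟩)⟩

lemma coprod_mem_addIn {V Q : C} {I : Type v} {ι : ∀ _ : I, V ⟶ Q}
    (hQ : IsCoproductIn Set.univ (fun _ : I => V) Q ι) : Q ∈ addIn Set.univ V :=
  ⟨trivial, I, Q, ι, hQ, 𝟙 Q, 𝟙 Q, by simp⟩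

lemma V_mem_addIn (V : C) : V ∈ addIn Set.univ V :=
  coprod_mem_addIn (isCoproductIn_self V)

lemma addIn_subset_genIn {V A : C} (h : A ∈ addIn Set.univ V) : A ∈ genIn Set.univ V :=
  ⟨trivial, A, h, 𝟙 A, inferInstance⟩

lemma genIn_of_epi_addIn {V X A : C} (hX : X ∈ addIn Set.univ V) (p : X ⟶ A) (hp : Epi p) :
    A ∈ genIn Set.univ V := ⟨trivial, X, hX, p, hp⟩

lemma genIn_quot {V A A' : C} (h : A ∈ genIn Set.univ V) (e : A ⟶ A') (he : Epi e) :
    A' ∈ genIn Set.univ V := by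
  obtain ⟨-, X, hX, p, hp⟩ := h
  haveI := hp
  haveI := he
  exact ⟨trivial, X, hX, p ≫ e, epi_comp p e⟩

lemma isZero_of_epi_zero {Q A : C} (e : Q ⟶ A) (he : Epi e) (h0 : e = 0) : IsZero A := by
  refine (IsZero.iff_id_eq_zero A).2 ?_
  have := he
  rw [← cancel_epi e, h0, comp_zero, zero_comp]

lemma hom_eq_zero_of_addIn {V X Z : C} (hX : X ∈ addIn Set.univ V) (f : X ⟶ Z)
    (hV : ∀ g : V ⟶ Z, g = 0) : f = 0 := by
  obtain ⟨-, I, Q, ι, hQ, s, r, hsr⟩ := hX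
  obtain ⟨h0, -, h0u⟩ := hQ.desc Z trivial (fun _ => (0 : V ⟶ Z))
  have e1 : r ≫ f = h0 := h0u _ (fun i => hV _)
  have e2 : (0 : Q ⟶ Z) = h0 := h0u _ (fun i => by simpa using (hV 0).symm)
  calc f = (s ≫ r) ≫ f := by rw [hsr, Category.id_comp]
  _ = s ≫ h0 := by rw [Category.assoc, e1]
  _ = s ≫ 0 := by rw [← e2]
  _ = 0 := comp_zero

lemma hom_eq_zero_of_genIn {V A Z : C} (hA : A ∈ genIn Set.univ V) (f : A ⟶ Z)
    (hV : ∀ g : V ⟶ Z, g = 0) : f = 0 := by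
  obtain ⟨-, X, hX, p, hp⟩ := hA
  have h1 : p ≫ f = 0 := hom_eq_zero_of_addIn hX _ hV
  have := hp
  rw [← cancel_epi p, h1, comp_zero]

lemma ext1Zero_of_addIn {V Q : C} (hQ : Q ∈ addIn Set.univ V)
    (hcop : ∀ (I : Type v) (Qc : C) (ι : ∀ _ : I, V ⟶ Qc),
      IsCoproductIn Set.univ (fun _ : I => V) Qc ι → Ext1Zero V Qc) : Ext1Zero V Q := by
  obtain ⟨-, I, Qc, ι, hc, s, r, hsr⟩ := hQ
  exact (hcop I Qc ι hc).ofRetract s r hsr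

section Sigma

variable [HasCoproducts.{v} C]

lemma isCoproductIn_sigma {I : Type v} (f : I → C) :
    IsCoproductIn (Set.univ : Set C) f (∐ f) (fun i => Sigma.ι f i) where
  mem _ := trivial
  memQ := trivial
  desc Z _ g := ⟨Sigma.desc g, fun i => by simp, fun y hy => by
    apply Sigma.hom_ext
    intro i
    rw [hy i, colimit.ι_desc]
    rfl⟩

lemma isCoproductCocone_sigma {I : Type v} (f : I → C) :
    IsCoproductCocone f (∐ f) (fun i => Sigma.ι f i) := fun Z g =>
  ((isCoproductIn_sigma f).desc Z trivial g)

end Sigma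

/-- finite biproducts of copies of `V`, with a `Type v` index -/
lemma isCoproductIn_biproduct (V : C) (n : ℕ) :
    IsCoproductIn (Set.univ : Set C) (fun _ : ULift.{v} (Fin n) => V)
      (⨁ fun _ : Fin n => V) (fun j => biproduct.ι (fun _ : Fin n => V) j.down) where
  mem _ := trivial
  memQ := trivial
  desc Z _ g := by
    refine ⟨biproduct.desc (fun j => g ⟨j⟩), fun i => by simp, fun y hy => ?_⟩
    apply biproduct.hom_ext'
    intro j
    rw [hy ⟨j⟩, biproduct.ι_desc]

/-! ### Trace data -/

structure TraceData (V A : C) : Type (max u v) where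
  Q : C
  u : Q ⟶ A
  memQ : Q ∈ addIn Set.univ V
  fac : ∀ f : V ⟶ A, ∃ f' : V ⟶ Q, f' ≫ u = f

lemma traceData_of_ab4 (hab4 : Ab4Type C) (V A : C) : Nonempty (TraceData V A) := by
  haveI := hab4.1
  refine ⟨⟨∐ (fun _ : (V ⟶ A) => V), Sigma.desc (fun f => f),
    coprod_mem_addIn (isCoproductIn_sigma _), fun f => ⟨Sigma.ι (fun _ : (V ⟶ A) => V) f, ?_⟩⟩⟩
  simp

lemma traceData_of_homFinite (hf : HomFiniteStruct C) (V A : C) : Nonempty (TraceData V A) := by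
  letI := hf.commRing
  letI := hf.linear
  haveI := hf.homFinite V A
  obtain ⟨n, s, hs⟩ := Module.Finite.exists_fin (R := hf.R) (M := (V ⟶ A))
  refine ⟨⟨⨁ (fun _ : Fin n => V), biproduct.desc s,
    coprod_mem_addIn (isCoproductIn_biproduct V n), fun f => ?_⟩⟩
  have hf' : f ∈ Submodule.span hf.R (Set.range s) := by rw [hs]; trivial
  obtain ⟨c, hc⟩ := (Submodule.mem_span_range_iff_exists_fun _).1 hf'
  refine ⟨∑ i, c i • biproduct.ι (fun _ : Fin n => V) i, ?_⟩
  rw [sum_comp]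
  simp only [Linear.smul_comp, biproduct.ι_desc]
  exact hc

/-! ### Universal extension data -/

structure UnivData (V A : C) : Type (max u v) where
  X : C
  P : C
  u : A ⟶ X
  pP : X ⟶ P
  ses : IsShortExact u pP
  memP : P ∈ addIn Set.univ V
  ext : ∀ (E : C) (i : A ⟶ E) (q : E ⟶ V), IsShortExact i q → ∃ ψ : E ⟶ X, i ≫ ψ = u

lemma univData_of_fg (V A : C) (hfg : Ext1FGEnd V A) : Nonempty (UnivData V A) := by
  obtain ⟨n, X, u, p, hse, hext⟩ := hfg
  refine ⟨⟨X, _, u, p, hse, coprod_mem_addIn (isCoproductIn_biproduct V n), ?_⟩⟩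
  intro E i q hq
  obtain ⟨h, φ, hφ, -⟩ := hext E i q hq
  exact ⟨φ, hφ⟩

/-- Yoneda equivalence of extensions is an equivalence relation. -/
lemma extRel_equivalence (X Y : C) : Equivalence (extRel X Y) := by
  constructor
  · intro e
    exact ⟨𝟙 _, by simp, by simp⟩
  · rintro e₁ e₂ ⟨φ, h1, h2⟩
    have hiso : IsIso φ := ses_ladder_isIso e₁.2.2.2 e₂.2.2.2 φ h1 h2
    refine ⟨inv φ, ?_, ?_⟩
    · rw [← h1, Category.assoc, IsIso.hom_inv_id, Category.comp_id]
    · rw [← h2, IsIso.inv_hom_id_assoc]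
  · rintro e₁ e₂ e₃ ⟨φ, h1, h2⟩ ⟨ψ, h3, h4⟩
    exact ⟨φ ≫ ψ, by rw [← Category.assoc, h1, h3], by rw [Category.assoc, h4, h2]⟩

lemma univData_of_ab4 (hab4 : Ab4Type C) (V A : C) (hsmall : Small.{v} (ExtClass V A)) :
    Nonempty (UnivData V A) := by
  haveI := hab4.1
  haveI : Small.{v} (Quot (extRel V A)) := hsmall
  classical
  let J : Type v := Shrink (Quot (extRel V A))
  let rep : J → ExtElem V A := fun j => (Quot.exists_rep ((equivShrink _).symm j)).choose
  have hrep : ∀ j, Quot.mk (extRel V A) (rep j) = (equivShrink (Quot (extRel V A))).symm j :=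
    fun j => (Quot.exists_rep ((equivShrink _).symm j)).choose_spec
  set uu : (∐ fun _ : J => A) ⟶ (∐ fun j : J => (rep j).1) :=
    Limits.Sigma.map (fun j => (rep j).2.1) with huu
  set qq : (∐ fun j : J => (rep j).1) ⟶ (∐ fun _ : J => V) :=
    Limits.Sigma.map (fun j => (rep j).2.2.1) with hqq
  have hcomm1 : ∀ j : J, Sigma.ι (fun _ : J => A) j ≫ uu
      = (rep j).2.1 ≫ Sigma.ι (fun j : J => (rep j).1) j := by
    intro j; simp [huu]
  have hcomm2 : ∀ j : J, Sigma.ι (fun j : J => (rep j).1) j ≫ qq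
      = (rep j).2.2.1 ≫ Sigma.ι (fun _ : J => V) j := by
    intro j; simp [hqq]
  have hmono : Mono uu := by
    exact hab4.2 J (fun _ : J => A) (fun j : J => (rep j).1) (fun j => (rep j).2.1)
      (fun j => (rep j).2.2.2.mono) _ _
      (fun j => Sigma.ι (fun _ : J => A) j) (fun j => Sigma.ι (fun j : J => (rep j).1) j) uu
      (isCoproductCocone_sigma _) (isCoproductCocone_sigma _) (fun j => hcomm1 j)
  have hepi : Epi qq := by
    haveI : ∀ j : J, Epi ((rep j).2.2.1) := fun j => (rep j).2.2.2.epi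
    rw [hqq]
    exact Limits.Sigma.map_epi _
  have hw : uu ≫ qq = 0 := by
    apply Sigma.hom_ext
    intro j
    rw [← Category.assoc, hcomm1 j, Category.assoc, hcomm2 j, ← Category.assoc,
      (rep j).2.2.2.w, zero_comp, comp_zero]
  have hdesc : ∀ {Z : C} (t : (∐ fun j : J => (rep j).1) ⟶ Z), uu ≫ t = 0 → ∃ s, qq ≫ s = t := by
    intro Z t ht
    have hch : ∀ j : J, ∃ sj : V ⟶ Z,
        (rep j).2.2.1 ≫ sj = Sigma.ι (fun j : J => (rep j).1) j ≫ t := fun j =>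
      (rep j).2.2.2.desc _ (by rw [← Category.assoc, ← hcomm1 j, Category.assoc, ht, comp_zero])
    choose s hs using hch
    refine ⟨Sigma.desc s, ?_⟩
    apply Sigma.hom_ext
    intro j
    rw [← Category.assoc, hcomm2 j, Category.assoc, colimit.ι_desc]
    exact hs j
  have hcoker : IsColimit (CokernelCofork.ofπ qq hw) :=
    CokernelCofork.IsColimit.ofπ _ _ (fun {Z} t ht => (hdesc t ht).choose)
      (fun {Z} t ht => (hdesc t ht).choose_spec)
      (fun {Z} t ht m hm => by
        have : Epi qq := hepi
        rw [← cancel_epi qq, hm, (hdesc t ht).choose_spec])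
  have hse : IsShortExact uu qq :=
    isShortExact_mk hw hmono hepi (ShortComplex.exact_of_g_is_cokernel _ hcoker)
  obtain ⟨X, u, pP, wX, hseX, hcomm, hwpP, -, -⟩ :=
    ses_pushout hse (Sigma.desc (fun _ : J => 𝟙 A))
  refine ⟨⟨X, _, u, pP, hseX, coprod_mem_addIn (isCoproductIn_sigma _), ?_⟩⟩
  intro E i q hq
  have hquot : Quot.mk (extRel V A) (rep (equivShrink (Quot (extRel V A))
        (Quot.mk (extRel V A) (⟨E, i, q, hq⟩ : ExtElem V A))))
      = Quot.mk (extRel V A) (⟨E, i, q, hq⟩ : ExtElem V A) := by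
    rw [hrep, Equiv.symm_apply_apply]
  set j := equivShrink (Quot (extRel V A)) (Quot.mk (extRel V A) (⟨E, i, q, hq⟩ : ExtElem V A))
    with hjdef
  have hrel : extRel V A (⟨E, i, q, hq⟩ : ExtElem V A) (rep j) :=
    ((extRel_equivalence V A).eqvGen_iff).1 (Quot.eq.1 hquot.symm)
  obtain ⟨φ, hφ1, hφ2⟩ := hrel
  refine ⟨φ ≫ Sigma.ι (fun j : J => (rep j).1) j ≫ wX, ?_⟩
  rw [← Category.assoc, hφ1, ← Category.assoc, ← hcomm1 j, Category.assoc, hcomm, ← Category.assoc]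
  simp


end

section


variable {C : Type u} [Category.{v} C] [Abelian C]

/-- The middle term of a universal extension is in `V^⊥₁`. -/
lemma UnivData.ext1ZeroX {V A : C} (d : UnivData V A) (hP : Ext1Zero V d.P) :
    Ext1Zero V d.X := by
  apply ext1Zero_intro
  intro F a b hab
  have hma := hab.mono
  have hmb := hab.epi
  have hmu := d.ses.mono
  have hepP := d.ses.epi
  -- push out along `pP : X ⟶ P`
  obtain ⟨F', a', b', wF, hse', hcomm, hwb, hup, hext⟩ := ses_pushout hab d.pP
  -- hcomm : a ≫ wF = d.pP ≫ a';  hwb : wF ≫ b' = b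
  have hwepi : Epi wF := by
    constructor
    intro Z t₁ t₂ ht
    have h1 : a' ≫ t₁ = a' ≫ t₂ := by
      rw [← cancel_epi d.pP, ← Category.assoc, ← hcomm, ← Category.assoc, ← hcomm,
        Category.assoc, Category.assoc, ht]
    exact hext t₁ t₂ ht h1
  -- split it
  obtain ⟨ρ, hρ⟩ := hP.split hse'
  obtain ⟨σ, hσ⟩ := hse'.sectionOfRetraction ρ hρ
  -- the pullback of `wF` along `σ`
  set W := pullback wF σ with hW
  have hcond : (d.u ≫ a) ≫ wF = 0 ≫ σ := by
    rw [Category.assoc, hcomm, ← Category.assoc, d.ses.w, zero_comp, zero_comp]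
  set e : A ⟶ W := pullback.lift (d.u ≫ a) 0 hcond with he
  have hefst : e ≫ pullback.fst wF σ = d.u ≫ a := pullback.lift_fst _ _ _
  have hesnd : e ≫ pullback.snd wF σ = 0 := pullback.lift_snd _ _ _
  have hkerw : ∀ {T : C} (t : T ⟶ F), t ≫ wF = 0 → ∃ t₂ : T ⟶ A, t₂ ≫ (d.u ≫ a) = t := by
    intro T t ht
    have h1 : t ≫ b = 0 := by rw [← hwb, ← Category.assoc, ht, zero_comp]
    obtain ⟨t₁, ht₁⟩ := hab.lift t h1
    have h2 : t₁ ≫ d.pP = 0 := by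
      have hma' : Mono a' := hse'.mono
      rw [← cancel_mono a', Category.assoc, ← hcomm, ← Category.assoc, ht₁, ht, zero_comp]
    obtain ⟨t₂, ht₂⟩ := d.ses.lift t₁ h2
    exact ⟨t₂, by rw [← Category.assoc, ht₂, ht₁]⟩
  have hker : ∀ {T : C} (t : T ⟶ W), t ≫ pullback.snd wF σ = 0 → ∃ t₂ : T ⟶ A, t₂ ≫ e = t := by
    intro T t ht
    have h1 : (t ≫ pullback.fst wF σ) ≫ wF = 0 := by
      rw [Category.assoc, pullback.condition, ← Category.assoc, ht, zero_comp]
    obtain ⟨t₂, ht₂⟩ := hkerw _ h1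
    refine ⟨t₂, pullback.hom_ext ?_ ?_⟩
    · rw [Category.assoc, hefst, ht₂]
    · rw [Category.assoc, hesnd, comp_zero, ht]
  have hmonoe : Mono e := by
    have : Mono (d.u ≫ a) := mono_comp _ _
    exact mono_of_mono_fac hefst
  have hepiV : Epi (pullback.snd wF σ) := by
    have : Epi wF := hwepi
    infer_instance
  have hwe : e ≫ pullback.snd wF σ = 0 := hesnd
  have hseW : IsShortExact e (pullback.snd wF σ) := by
    refine isShortExact_mk hwe hmonoe hepiV ?_
    apply ShortComplex.exact_of_f_is_kernel
    refine KernelFork.IsLimit.ofι _ _ (fun {T} s hs => (hker s hs).choose)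
      (fun {T} s hs => (hker s hs).choose_spec) (fun {T} s hs m hm => ?_)
    have : Mono e := hmonoe
    rw [← cancel_mono e, hm, (hker s hs).choose_spec]
  -- apply the universal property
  obtain ⟨ψ, hψ⟩ := d.ext W e (pullback.snd wF σ) hseW
  -- push out `(e, snd)` along `u`
  obtain ⟨G, inX, gV, inE, hseG, hcommG, hgV, hupG, hextG⟩ := ses_pushout hseW d.u
  -- hcommG : e ≫ inE = d.u ≫ inX, hgV : inE ≫ gV = pullback.snd wF σ
  obtain ⟨γ, hγ1, hγ2⟩ := hupG ψ (𝟙 d.X) (by rw [hψ, Category.comp_id])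
  obtain ⟨Φ, hΦ1, hΦ2⟩ := hupG (pullback.fst wF σ) a hefst
  have hΦb : Φ ≫ b = gV := by
    apply hextG
    · rw [← Category.assoc, hΦ1, ← hwb, ← Category.assoc, pullback.condition, Category.assoc,
        hσ, Category.comp_id, hgV]
    · rw [← Category.assoc, hΦ2, hab.w, hseG.w]
  have hIso : IsIso Φ := ses_ladder_isIso hseG hab Φ hΦ2 hΦb
  refine ⟨inv Φ ≫ γ, ?_⟩
  have hainv : a ≫ inv Φ = inX := by rw [← hΦ2]; simp
  rw [← Category.assoc, hainv, hγ2]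


end

section


variable {C : Type u} [Category.{v} C] [Abelian C]

lemma mem_rightPerp_iff {V A : C} : A ∈ rightPerp Set.univ V ↔ Ext1Zero V A :=
  ⟨fun h => h.2, fun h => ⟨trivial, h⟩⟩

/-- (3) ⟹ (2) -/
lemma gen_eq_perp_of_three {V : C}
    (htd : ∀ A : C, Nonempty (TraceData V A))
    (hpd : ProjDimLE1 V)
    (hcop : ∀ (I : Type v) (Q : C) (ι : ∀ _ : I, V ⟶ Q),
      IsCoproductIn Set.univ (fun _ : I => V) Q ι → Ext1Zero V Q)
    (hnd : ∀ A : C, (∀ f : V ⟶ A, f = 0) → Ext1Zero V A → IsZero A) :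
    genIn Set.univ V = rightPerp Set.univ V := by
  ext A
  rw [mem_rightPerp_iff]
  constructor
  · rintro ⟨-, X, hX, q, hq⟩
    have hXperp : Ext1Zero V X := ext1Zero_of_addIn hX hcop
    exact ext1Zero_of_epi_of_ext2 (kernel_isShortExact q hq) hXperp (hpd _)
  · intro hA
    obtain ⟨d⟩ := htd A
    set T := Abelian.image d.u with hT
    set ubar : d.Q ⟶ T := Abelian.factorThruImage d.u with hubar
    set mT : T ⟶ A := Abelian.image.ι d.u with hmT
    have hfacu : ubar ≫ mT = d.u := Abelian.image.fac d.u
    have hubar_epi : Epi ubar := inferInstance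
    have hmT_mono : Mono mT := inferInstance
    have hTgen : T ∈ genIn Set.univ V := genIn_of_epi_addIn d.memQ ubar hubar_epi
    have hTperp : Ext1Zero V T :=
      ext1Zero_of_epi_of_ext2 (kernel_isShortExact ubar hubar_epi)
        (ext1Zero_of_addIn d.memQ hcop) (hpd _)
    have hseT : IsShortExact mT (cokernel.π mT) := cokernel_isShortExact mT hmT_mono
    -- every map V ⟶ cokernel mT is zero
    have hhom0 : ∀ gg : V ⟶ cokernel mT, gg = 0 := by
      intro gg
      obtain ⟨E, i', p', gE, hseE, hi', hcomm, -, -⟩ := ses_pullback hseT gg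
      obtain ⟨r, hr⟩ := hTperp.split hseE
      obtain ⟨s, hs⟩ := hseE.sectionOfRetraction r hr
      obtain ⟨f', hf'⟩ := d.fac (s ≫ gE)
      have h1 : gg = (s ≫ gE) ≫ cokernel.π mT := by
        rw [Category.assoc, hcomm, ← Category.assoc, hs, Category.id_comp]
      rw [h1, ← hf', ← hfacu]
      simp
    -- Ext¹(V, cokernel mT) = 0
    have hext0 : Ext1Zero V (cokernel mT) :=
      ext1Zero_of_epi_of_ext2 hseT hA (hpd _)
    have hzero : IsZero (cokernel mT) := hnd _ hhom0 hext0
    have hcT0 : cokernel.π mT = 0 := hzero.eq_of_tgt _ _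
    have hmT_epi : Epi mT := by
      rw [epi_iff_cancel_zero]
      intro Z w hw
      have := cokernel.π_desc mT w hw
      rw [← this, hcT0, zero_comp]
    have hu_epi : Epi d.u := by
      rw [← hfacu]
      exact epi_comp ubar mT
    exact genIn_of_epi_addIn d.memQ d.u hu_epi

/-- (2) ⟹ (3b) -/
lemma coprod_ext1Zero_of_gen_eq_perp {V : C}
    (heq : genIn Set.univ V = rightPerp Set.univ V) :
    ∀ (I : Type v) (Q : C) (ι : ∀ _ : I, V ⟶ Q),
      IsCoproductIn Set.univ (fun _ : I => V) Q ι → Ext1Zero V Q := by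
  intro I Q ι hc
  have : Q ∈ genIn Set.univ V := addIn_subset_genIn (coprod_mem_addIn hc)
  rw [heq] at this
  exact mem_rightPerp_iff.1 this

/-- (2) ⟹ (3c) -/
lemma nondegen_of_gen_eq_perp {V : C}
    (heq : genIn Set.univ V = rightPerp Set.univ V) :
    ∀ A : C, (∀ f : V ⟶ A, f = 0) → Ext1Zero V A → IsZero A := by
  intro A h0 hext
  have : A ∈ genIn Set.univ V := by rw [heq]; exact mem_rightPerp_iff.2 hext
  obtain ⟨-, X, hX, q, hq⟩ := this
  exact isZero_of_epi_zero q hq (hom_eq_zero_of_addIn hX q h0)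


end

section


variable {C : Type u} [Category.{v} C] [Abelian C]

/-- (2) ⟹ (3a): projective dimension at most one. -/
lemma projDimLE1_of_gen_eq_perp {V : C}
    (hud : ∀ A : C, Nonempty (UnivData V A))
    (heq : genIn Set.univ V = rightPerp Set.univ V) : ProjDimLE1 V := by
  intro A X1 X0 g f p w1 w2 hmg hep hex1 hex2
  -- image factorization of f
  set M := Abelian.image f with hM
  set h : X1 ⟶ M := Abelian.factorThruImage f with hh
  set m : M ⟶ X0 := Abelian.image.ι f with hm
  have hfac : h ≫ m = f := Abelian.image.fac f
  have hhepi : Epi h := inferInstance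
  have hmmono : Mono m := inferInstance
  -- the two short exact sequences
  have hgh0 : g ≫ h = 0 := by
    rw [← cancel_mono m, Category.assoc, hfac, w1, zero_comp]
  have hses1 : IsShortExact g h := by
    refine isShortExact_mk hgh0 hmg hhepi ?_
    apply Pseudoelement.exact_of_pseudo_exact
    intro x hx
    have hfx : f x = 0 := by
      rw [← hfac, Pseudoelement.comp_apply, hx, Pseudoelement.apply_zero]
    exact Pseudoelement.pseudo_exact_of_exact hex1 x hfx
  have hmp0 : m ≫ p = 0 := by
    rw [← cancel_epi h, ← Category.assoc, hfac, w2, comp_zero]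
  have hses2 : IsShortExact m p := by
    refine isShortExact_mk hmp0 hmmono hep ?_
    apply Pseudoelement.exact_of_pseudo_exact
    intro x0 hx0
    obtain ⟨x1, hx1⟩ := Pseudoelement.pseudo_exact_of_exact hex2 x0 hx0
    refine ⟨h x1, ?_⟩
    rw [← Pseudoelement.comp_apply, hfac, hx1]
  -- universal extension of V by X1
  obtain ⟨d⟩ := hud X1
  -- quotient sequence 0 → M → U/A → P → 0
  obtain ⟨U', c, w', π', hsesU', hepic, hvc, hcπ'⟩ := ses_quotient hses1 d.ses
  -- U ∈ V^⊥₁, hence U ∈ Gen V, so U' ∈ Gen V = V^⊥₁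
  have hPperp : Ext1Zero V d.P := by
    have : d.P ∈ genIn Set.univ V := addIn_subset_genIn d.memP
    rw [heq] at this
    exact mem_rightPerp_iff.1 this
  have hUperp : Ext1Zero V d.X := d.ext1ZeroX hPperp
  have hUgen : d.X ∈ genIn Set.univ V := by
    rw [heq]; exact mem_rightPerp_iff.2 hUperp
  have hU'perp : Ext1Zero V U' := by
    have : U' ∈ genIn Set.univ V := genIn_quot hUgen c hepic
    rw [heq] at this
    exact mem_rightPerp_iff.1 this
  -- push out (m, p) along w' and split, getting ψ : X0 ⟶ U' with m ≫ ψ = w'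
  obtain ⟨G, iG, pG, gX0, hseG, hcommG, hgXp, -, -⟩ := ses_pushout hses2 w'
  obtain ⟨ρG, hρG⟩ := hU'perp.split hseG
  have hmψ : m ≫ gX0 ≫ ρG = w' := by
    rw [← Category.assoc, hcommG, Category.assoc, hρG, Category.comp_id]
  -- t : V ⟶ P with p ≫ t = (gX0 ≫ ρG) ≫ π'
  have hdesc0 : m ≫ (gX0 ≫ ρG) ≫ π' = 0 := by
    simp only [Category.assoc]
    rw [reassoc_of% hmψ, hsesU'.w]
  obtain ⟨t, ht⟩ := hses2.desc ((gX0 ≫ ρG) ≫ π') hdesc0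
  -- pull back the universal extension along t
  obtain ⟨W, iW, pW, gU, hseW, hiW, hgU, hupW, hextW⟩ := ses_pullback d.ses t
  -- pull back the quotient sequence along t
  obtain ⟨Z, iZ, pZ, gZ, hseZ, hiZ, hgZ, hupZ, hextZ⟩ := ses_pullback hsesU' t
  -- θ : X0 ≅ Z
  obtain ⟨θ, hθ1, hθ2⟩ := hupZ (gX0 ≫ ρG) p ht.symm
  have hmθ : m ≫ θ = iZ := by
    apply hextZ
    · rw [Category.assoc, hθ1, hmψ, hiZ]
    · rw [Category.assoc, hθ2, hses2.w, hseZ.w]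
  have hθiso : IsIso θ := ses_ladder_isIso hses2 hseZ θ hmθ hθ2
  -- κ : W ⟶ Z
  have hκcond : (gU ≫ c) ≫ π' = pW ≫ t := by
    rw [Category.assoc, hcπ', hgU]
  obtain ⟨κ, hκ1, hκ2⟩ := hupZ (gU ≫ c) pW hκcond
  set χ : W ⟶ X0 := κ ≫ inv θ with hχ
  -- key identities
  have hiκ : iW ≫ κ = (h ≫ m) ≫ θ := by
    apply hextZ
    · have e1 : (iW ≫ κ) ≫ gZ = h ≫ w' := by
        rw [Category.assoc, hκ1, ← Category.assoc, hiW, hvc]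
      have e2 : ((h ≫ m) ≫ θ) ≫ gZ = h ≫ w' := by
        rw [Category.assoc, Category.assoc, ← Category.assoc m θ gZ, hmθ, hiZ]
      rw [e1, e2]
    · have e1 : (iW ≫ κ) ≫ pZ = 0 := by rw [Category.assoc, hκ2, hseW.w]
      have e2 : ((h ≫ m) ≫ θ) ≫ pZ = 0 := by
        rw [Category.assoc, Category.assoc, hθ2, hses2.w, comp_zero]
      rw [e1, e2]
  have hαχ : iW ≫ χ = h ≫ m := by
    rw [hχ, ← Category.assoc, hiκ, Category.assoc, Category.assoc, IsIso.hom_inv_id,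
      Category.comp_id]
  have hinvθp : inv θ ≫ p = pZ := by
    rw [IsIso.inv_comp_eq, hθ2]
  have hχp : χ ≫ p = pW := by
    rw [hχ, Category.assoc, hinvθp, hκ2]
  -- χ is epi
  have hχepi : Epi χ := by
    rw [epi_iff_cancel_zero]
    intro Z₀ cc hcc
    have h1 : m ≫ cc = 0 := by
      rw [← cancel_epi h, ← Category.assoc, ← hαχ, Category.assoc, hcc, comp_zero, comp_zero]
    obtain ⟨c', hc'⟩ := hses2.desc cc h1
    have h2 : pW ≫ c' = 0 := by
      rw [← hχp, Category.assoc, hc', hcc]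
    have := hseW.epi
    have hc'0 : c' = 0 := by
      rw [← cancel_epi pW, h2, comp_zero]
    rw [← hc', hc'0, comp_zero]
  -- kernel property
  have hker : ∀ {T : C} (s : T ⟶ W), s ≫ χ = 0 → ∃ t₂ : T ⟶ A, t₂ ≫ (g ≫ iW) = s := by
    intro T s hs
    have h1 : s ≫ pW = 0 := by
      rw [← hχp, ← Category.assoc, hs, zero_comp]
    obtain ⟨t₁, ht₁⟩ := hseW.lift s h1
    have h2 : t₁ ≫ h = 0 := by
      rw [← cancel_mono m, Category.assoc, zero_comp, ← hαχ, ← Category.assoc, ht₁, hs]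
    obtain ⟨t₂, ht₂⟩ := hses1.lift t₁ h2
    exact ⟨t₂, by rw [← Category.assoc, ht₂, ht₁]⟩
  have hgiWmono : Mono (g ≫ iW) := by
    have := hseW.mono
    exact mono_comp g iW
  have hwaχ : (g ≫ iW) ≫ χ = 0 := by
    rw [Category.assoc, hαχ, ← Category.assoc, hgh0, zero_comp]
  have hseFinal : IsShortExact (g ≫ iW) χ := by
    refine isShortExact_mk hwaχ hgiWmono hχepi ?_
    apply ShortComplex.exact_of_f_is_kernel
    refine KernelFork.IsLimit.ofι _ _ (fun {T} s hs => (hker s hs).choose)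
      (fun {T} s hs => (hker s hs).choose_spec) (fun {T} s hs mm hmm => ?_)
    have : Mono (g ≫ iW) := hgiWmono
    rw [← cancel_mono (g ≫ iW), hmm, (hker s hs).choose_spec]
  exact ⟨W, g ≫ iW, χ, hseFinal, iW, rfl, by rw [hαχ, hfac]⟩


end

section


variable {C : Type u} [Category.{v} C] [Abelian C]

/-- (1) ⟹ (2) -/
lemma gen_eq_perp_of_tilting {V : C} (ht : IsTiltingIn Set.univ V) :
    genIn Set.univ V = rightPerp Set.univ V := by
  obtain ⟨⟨hV, htor, hpres, hbar⟩, hcog⟩ := ht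
  ext A
  constructor
  · intro hA
    rw [hbar] at hA
    exact hA.2
  · intro hA
    rw [hbar]
    refine ⟨?_, hA⟩
    obtain ⟨T, hT, f, hf⟩ := hcog A trivial
    exact ⟨trivial, T, hT, f, hf⟩

lemma IsShortExact.epi_i_of_p_zero {A E B : C} {i : A ⟶ E} {p : E ⟶ B}
    (hse : IsShortExact i p) (h0 : p = 0) : Epi i := by
  rw [epi_iff_cancel_zero]
  intro Z w hw
  obtain ⟨l, hl⟩ := hse.desc w hw
  rw [← hl, h0, zero_comp]

lemma hom_eq_zero_of_addIn' {V X Z : C} (hX : X ∈ addIn Set.univ V) (f : X ⟶ Z)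
    (hV : ∀ g : V ⟶ X, g ≫ f = 0) : f = 0 := by
  obtain ⟨-, I, Q, ι, hQ, s, r, hsr⟩ := hX
  obtain ⟨h0, -, h0u⟩ := hQ.desc Z trivial (fun _ => (0 : V ⟶ Z))
  have e1 : r ≫ f = h0 := h0u _ (fun i => by rw [← Category.assoc]; exact hV (ι i ≫ r))
  have e2 : (0 : Q ⟶ Z) = h0 := h0u _ (fun i => by simp)
  calc f = (s ≫ r) ≫ f := by rw [hsr, Category.id_comp]
  _ = s ≫ h0 := by rw [Category.assoc, e1]
  _ = s ≫ 0 := by rw [← e2]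
  _ = 0 := comp_zero

/-- trace short exact sequence of an arbitrary object, under (2) -/
lemma trace_ses {V A : C} (d : TraceData V A)
    (heq : genIn Set.univ V = rightPerp Set.univ V) :
    ∃ (T Cq : C) (mT : T ⟶ A) (cT : A ⟶ Cq), IsShortExact mT cT ∧ T ∈ genIn Set.univ V ∧
      (∀ gg : V ⟶ Cq, gg = 0) ∧ (∀ f : V ⟶ A, ∃ f₀ : V ⟶ T, f₀ ≫ mT = f) := by
  set T := Abelian.image d.u with hT
  set ubar : d.Q ⟶ T := Abelian.factorThruImage d.u with hubar
  set mT : T ⟶ A := Abelian.image.ι d.u with hmT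
  have hfacu : ubar ≫ mT = d.u := Abelian.image.fac d.u
  have hubar_epi : Epi ubar := inferInstance
  have hmT_mono : Mono mT := inferInstance
  have hTgen : T ∈ genIn Set.univ V := genIn_of_epi_addIn d.memQ ubar hubar_epi
  have hTperp : Ext1Zero V T := by
    have := hTgen
    rw [heq] at this
    exact mem_rightPerp_iff.1 this
  have hseT : IsShortExact mT (cokernel.π mT) := cokernel_isShortExact mT hmT_mono
  refine ⟨T, cokernel mT, mT, cokernel.π mT, hseT, hTgen, ?_, ?_⟩
  · intro gg
    obtain ⟨E, i', p', gE, hseE, hi', hcomm, -, -⟩ := ses_pullback hseT gg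
    obtain ⟨r, hr⟩ := hTperp.split hseE
    obtain ⟨s, hs⟩ := hseE.sectionOfRetraction r hr
    obtain ⟨f', hf'⟩ := d.fac (s ≫ gE)
    have h1 : gg = (s ≫ gE) ≫ cokernel.π mT := by
      rw [Category.assoc, hcomm, ← Category.assoc, hs, Category.id_comp]
    rw [h1, ← hf', ← hfacu]
    simp
  · intro f
    obtain ⟨f', hf'⟩ := d.fac f
    exact ⟨f' ≫ ubar, by rw [Category.assoc, hfacu, hf']⟩

/-- (2) ⟹ Gen V is a torsion class. -/
lemma torsion_of_gen_eq_perp {V : C} (htd : ∀ A : C, Nonempty (TraceData V A))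
    (heq : genIn Set.univ V = rightPerp Set.univ V) :
    IsTorsionClassIn Set.univ (genIn Set.univ V) := by
  refine ⟨{A ∈ Set.univ | ∀ X ∈ genIn Set.univ V, ∀ f : X ⟶ A, f = 0}, rfl, ?_, ?_⟩
  · ext A
    constructor
    · intro hA
      exact ⟨trivial, fun Y hY f => hY.2 A hA f⟩
    · rintro ⟨-, hA⟩
      obtain ⟨T, Cq, mT, cT, hse, hTgen, hhom0, -⟩ := trace_ses (htd A).some heq
      have hCqF : Cq ∈ {A ∈ Set.univ | ∀ X ∈ genIn Set.univ V, ∀ f : X ⟶ Cq, f = 0} :=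
        ⟨trivial, fun X hX f => hom_eq_zero_of_genIn hX f hhom0⟩
      have hcT0 : cT = 0 := hA Cq hCqF cT
      have hmTepi : Epi mT := hse.epi_i_of_p_zero hcT0
      obtain ⟨-, X, hX, q, hq⟩ := hTgen
      haveI := hq
      haveI := hmTepi
      exact genIn_of_epi_addIn hX (q ≫ mT) (epi_comp q mT)
  · intro A _
    obtain ⟨T, Cq, mT, cT, hse, hTgen, hhom0, -⟩ := trace_ses (htd A).some heq
    exact ⟨T, Cq, mT, cT, hTgen,
      ⟨trivial, fun X hX f => hom_eq_zero_of_genIn hX f hhom0⟩, hse⟩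

/-- (2) ⟹ Gen V = Pres V. -/
lemma gen_eq_pres_of_gen_eq_perp {V : C} (htd : ∀ A : C, Nonempty (TraceData V A))
    (heq : genIn Set.univ V = rightPerp Set.univ V) :
    genIn Set.univ V = presIn Set.univ V := by
  ext A
  constructor
  · intro hA
    obtain ⟨-, Xh, hXh, q, hq⟩ := hA
    obtain ⟨d⟩ := htd A
    -- d.u is epi
    have huepi : Epi d.u := by
      rw [epi_iff_cancel_zero]
      intro Z cc hcc
      have hqc : q ≫ cc = 0 := by
        apply hom_eq_zero_of_addIn' hXh
        intro gg
        obtain ⟨f', hf'⟩ := d.fac (gg ≫ q)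
        rw [← Category.assoc, ← hf', Category.assoc, hcc, comp_zero]
      haveI := hq
      rw [← cancel_epi q, hqc, comp_zero]
    have hseK : IsShortExact (kernel.ι d.u) d.u := kernel_isShortExact d.u huepi
    have hQperp : Ext1Zero V d.Q := by
      have : d.Q ∈ genIn Set.univ V := addIn_subset_genIn d.memQ
      rw [heq] at this
      exact mem_rightPerp_iff.1 this
    have hKperp : Ext1Zero V (kernel d.u) :=
      ext1Zero_kernel_of_fac hseK hQperp d.fac
    have hKgen : kernel d.u ∈ genIn Set.univ V := by
      rw [heq]; exact mem_rightPerp_iff.2 hKperp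
    obtain ⟨-, XK, hXK, qK, hqK⟩ := hKgen
    have hwp : (qK ≫ kernel.ι d.u) ≫ d.u = 0 := by
      rw [Category.assoc, kernel.condition, comp_zero]
    refine ⟨trivial, XK, hXK, d.Q, d.memQ, qK ≫ kernel.ι d.u, d.u, hwp, huepi, ?_⟩
    apply Pseudoelement.exact_of_pseudo_exact
    intro b hb
    obtain ⟨k, hk⟩ := hseK.pexact b hb
    obtain ⟨x, hx⟩ := Pseudoelement.pseudo_surjective_of_epi qK k
    refine ⟨x, ?_⟩
    rw [Pseudoelement.comp_apply, hx, hk]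
  · rintro ⟨-, X, hX, Y, hY, f, cc, hw, hepi, hexact⟩
    exact ⟨trivial, Y, hY, cc, hepi⟩

/-- (2) ⟹ Gen V = Ḡen V ∩ V^⊥₁. -/
lemma gen_eq_barcap_of_gen_eq_perp {V : C}
    (heq : genIn Set.univ V = rightPerp Set.univ V) :
    genIn Set.univ V = barGenIn Set.univ V ∩ rightPerp Set.univ V := by
  ext A
  constructor
  · intro hA
    refine ⟨⟨trivial, A, hA, 𝟙 A, inferInstance⟩, ?_⟩
    rw [← heq]
    exact hA
  · rintro ⟨-, hA⟩
    rw [heq]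
    exact hA

/-- (2) ⟹ Gen V is cogenerating. -/
lemma cogen_of_gen_eq_perp {V : C} (hud : ∀ A : C, Nonempty (UnivData V A))
    (heq : genIn Set.univ V = rightPerp Set.univ V) :
    CogeneratingIn Set.univ (genIn Set.univ V) := by
  intro A _
  obtain ⟨d⟩ := hud A
  have hPperp : Ext1Zero V d.P := by
    have : d.P ∈ genIn Set.univ V := addIn_subset_genIn d.memP
    rw [heq] at this
    exact mem_rightPerp_iff.1 this
  have hXgen : d.X ∈ genIn Set.univ V := by
    rw [heq]
    exact mem_rightPerp_iff.2 (d.ext1ZeroX hPperp)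
  exact ⟨d.X, hXgen, d.u, d.ses.mono⟩

/-- (2) ⟹ (1) -/
lemma tilting_of_gen_eq_perp {V : C} (htd : ∀ A : C, Nonempty (TraceData V A))
    (hud : ∀ A : C, Nonempty (UnivData V A))
    (heq : genIn Set.univ V = rightPerp Set.univ V) : IsTiltingIn Set.univ V :=
  ⟨⟨trivial, torsion_of_gen_eq_perp htd heq, gen_eq_pres_of_gen_eq_perp htd heq,
    gen_eq_barcap_of_gen_eq_perp heq⟩, cogen_of_gen_eq_perp hud heq⟩


end

end Paper

end Helpers


/-!
STATEMENT 6 (Corollary `cor.different-definitions-tilting`).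
`𝒜` is either `Ext¹`-small and (Ab.4), or `Hom`-finite and `Ext¹`-finite.
(`Ext¹`-finiteness is encoded, as in Proposition 4.11 of the paper, by the finite
generation of each `Ext¹(A,B)` over the endomorphism ring of `A`, which in a
`Hom`-finite category is equivalent to finite generation over the ground ring.)
-/

namespace Stmt6

open Paper CategoryTheory CategoryTheory.Limits

variable {C : Type u} [Category.{v} C] [Abelian C]

theorem statement6
    (hyp : ((∀ A B : C, Small.{v} (ExtClass A B)) ∧ Ab4Type C) ∨
           (HomFinite C ∧ ∀ A B : C, Ext1FGEnd A B))
    (V : C) :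
    -- (1) ⇔ (2)
    (IsTiltingIn (Set.univ : Set C) V ↔ genIn Set.univ V = rightPerp Set.univ V) ∧
    -- (2) ⇔ (3)
    (genIn Set.univ V = rightPerp Set.univ V ↔
      (ProjDimLE1 V ∧
       (∀ (I : Type v) (Q : C) (ι : ∀ _ : I, V ⟶ Q),
          IsCoproductIn Set.univ (fun _ : I => V) Q ι → Ext1Zero V Q) ∧
       (∀ A : C, (∀ f : V ⟶ A, f = 0) → Ext1Zero V A → Limits.IsZero A))) := by
  have htd : ∀ A : C, Nonempty (TraceData V A) := by
    rcases hyp with ⟨-, hab4⟩ | ⟨⟨hfs⟩, -⟩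
    · exact fun A => traceData_of_ab4 hab4 V A
    · exact fun A => traceData_of_homFinite hfs V A
  have hud : ∀ A : C, Nonempty (UnivData V A) := by
    rcases hyp with ⟨hsmall, hab4⟩ | ⟨-, hfg⟩
    · exact fun A => univData_of_ab4 hab4 V A (hsmall V A)
    · exact fun A => univData_of_fg V A (hfg V A)
  constructor
  · exact ⟨gen_eq_perp_of_tilting, tilting_of_gen_eq_perp htd hud⟩
  · constructor
    · intro heq
      exact ⟨projDimLE1_of_gen_eq_perp hud heq, coprod_ext1Zero_of_gen_eq_perp heq,
        nondegen_of_gen_eq_perp heq⟩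
    · rintro ⟨hpd, hcop, hnd⟩
      exact gen_eq_perp_of_three htd hpd hcop hnd


end Stmt6
end

section
/- Let 𝒜 be an abelian category, V a quasi-tilting object and 𝒯 := Gen(V) the associated torsion class. Then: (1) ℬ := Sub(𝒯) is an abelian exact subcategory of 𝒜 (it is closed under finite coproducts, kernels and cokernels, so is abelian with exact inclusion) and V is a tilting object of ℬ; (2) Add(V) = ^{⊥1}𝒯 ∩ 𝒯; (3) if V' is another quasi-tilting object of 𝒜, then Gen(V) = Gen(V') if and only if Add(V) = Add(V'). -/
/-!
Common definitions for formalizing results of "Tilting preenvelopes and cotilting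
precovers in general Abelian categories" (Parra–Saorín–Virili).

Conventions:
* Full subcategories of an abelian category `C` are encoded as `Set C`.
* "Sets" (index sets of families, coproducts, …) are encoded as types in the universe `v`
  of the morphisms of `C`.
* `Ext¹(X,Y) = 0` is encoded via the splitting of all short exact sequences
  `0 → Y → E → X → 0` (equivalently, the vanishing of the Yoneda Ext group).
* Relative (`…In B`) notions encode the corresponding notion computed inside the
  full (abelian exact) subcategory determined by `B : Set C`; the ambient case is
  `B = Set.univ`.
* Coproducts are not assumed to exist: a coproduct of a family existing in the
  (sub)category is encoded by a cocone with the universal property (`IsCoproductIn`).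
-/

open CategoryTheory CategoryTheory.Limits

universe w v u

attribute [local instance] CategoryTheory.Abelian.hasFiniteBiproducts

/-!
STATEMENT 7 (Proposition `prop.properties of quasi-tilting`).
-/

namespace Stmt7
set_option linter.unusedSectionVars false

open Paper CategoryTheory CategoryTheory.Limits

variable {C : Type u} [Category.{v} C] [Abelian C]

lemma isShortExact_mk {X E A : C} (i : X ⟶ E) (p : E ⟶ A) (hw : i ≫ p = 0)
    [Mono i] [Epi p] (hex : (ShortComplex.mk i p hw).Exact) : IsShortExact i p :=
  ⟨hw, ShortComplex.ShortExact.mk' hex ‹_› ‹_›⟩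

lemma splitting_of_section {X E A : C} {i : X ⟶ E} {p : E ⟶ A} (h : IsShortExact i p)
    {s : A ⟶ E} (hs : s ≫ p = 𝟙 A) : ∃ r : E ⟶ X, i ≫ r = 𝟙 X := by
  obtain ⟨hw, hse⟩ := h
  haveI := hse.mono_f; haveI := hse.epi_g
  obtain ⟨r, hr⟩ := hse.exact.lift' (𝟙 E - p ≫ s)
    (by simp [Preadditive.sub_comp, Category.assoc, hs])
  refine ⟨r, ?_⟩
  rw [← cancel_mono i, Category.assoc, hr]
  simp [Preadditive.comp_sub, ← Category.assoc, hw]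

lemma section_of_retraction {X E A : C} {i : X ⟶ E} {p : E ⟶ A} (h : IsShortExact i p)
    {r : E ⟶ X} (hr : i ≫ r = 𝟙 X) : ∃ s : A ⟶ E, s ≫ p = 𝟙 A := by
  obtain ⟨hw, hse⟩ := h
  haveI := hse.mono_f; haveI := hse.epi_g
  obtain ⟨s, hs⟩ := hse.exact.desc' (𝟙 E - r ≫ i)
    (by simp [Preadditive.comp_sub, ← Category.assoc, hr])
  refine ⟨s, ?_⟩
  rw [← cancel_epi p, ← Category.assoc, hs]
  simp [Preadditive.sub_comp, Category.assoc, hw]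

lemma isShortExact_pullback {X E A B : C} {i : X ⟶ E} {p : E ⟶ A}
    (h : IsShortExact i p) (g : B ⟶ A) :
    ∃ k : X ⟶ pullback g p, k ≫ pullback.snd g p = i ∧ IsShortExact k (pullback.fst g p) := by
  obtain ⟨hw, hse⟩ := h
  haveI := hse.mono_f; haveI := hse.epi_g
  have hcomm : (0 : X ⟶ B) ≫ g = i ≫ p := by simp [hw]
  set k := pullback.lift (0 : X ⟶ B) i hcomm with hkdef
  have hks : k ≫ pullback.snd g p = i := pullback.lift_snd _ _ _
  have hkf : k ≫ pullback.fst g p = 0 := by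
    rw [hkdef, pullback.lift_fst]
  haveI : Mono k := mono_of_mono_fac hks
  refine ⟨k, hks, isShortExact_mk _ _ hkf ?_⟩
  apply ShortComplex.exact_of_f_is_kernel
  exact KernelFork.IsLimit.ofι' k hkf (fun {W} t ht => by
    have h2 : (t ≫ pullback.snd g p) ≫ p = 0 := by
      rw [Category.assoc, ← pullback.condition, ← Category.assoc, ht, zero_comp]
    refine ⟨hse.exact.lift (t ≫ pullback.snd g p) h2, pullback.hom_ext ?_ ?_⟩
    · rw [Category.assoc, hkf, comp_zero, ht]
    · rw [Category.assoc, hks]; exact hse.exact.lift_f _ h2)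

lemma isShortExact_pushout {A E X B : C} {i : A ⟶ E} {p : E ⟶ X}
    (h : IsShortExact i p) (g : A ⟶ B) :
    ∃ d : pushout g i ⟶ X, pushout.inr g i ≫ d = p ∧ IsShortExact (pushout.inl g i) d := by
  obtain ⟨hw, hse⟩ := h
  haveI := hse.mono_f; haveI := hse.epi_g
  have hcomm : g ≫ (0 : B ⟶ X) = i ≫ p := by rw [comp_zero, hw]
  set d := pushout.desc (0 : B ⟶ X) p hcomm with hddef
  have hrd : pushout.inr g i ≫ d = p := pushout.inr_desc _ _ _
  have hld : pushout.inl g i ≫ d = 0 := by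
    rw [hddef, pushout.inl_desc]
  haveI : Epi d := by
    haveI : Epi (pushout.inr g i ≫ d) := by rw [hrd]; infer_instance
    exact epi_of_epi (pushout.inr g i) d
  refine ⟨d, hrd, isShortExact_mk _ _ hld ?_⟩
  apply ShortComplex.exact_of_g_is_cokernel
  exact CokernelCofork.IsColimit.ofπ' d hld (fun {W} t ht => by
    have h2 : i ≫ (pushout.inr g i ≫ t) = 0 := by
      rw [← Category.assoc, ← pushout.condition, Category.assoc, ht, comp_zero]
    refine ⟨hse.exact.desc (pushout.inr g i ≫ t) h2, pushout.hom_ext ?_ ?_⟩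
    · rw [← Category.assoc, hld, zero_comp, ht]
    · rw [← Category.assoc, hrd]; exact hse.exact.g_desc _ h2)

lemma lift_of_ext1 {X E A B : C} {i : X ⟶ E} {p : E ⟶ A} (h : IsShortExact i p)
    (g : B ⟶ A) (hext : Ext1ZeroIn Set.univ B X) : ∃ ℓ : B ⟶ E, ℓ ≫ p = g := by
  obtain ⟨k, hks, hke⟩ := isShortExact_pullback h g
  obtain ⟨r, hr⟩ := hext (pullback g p) trivial k (pullback.fst g p) hke
  obtain ⟨s, hs⟩ := section_of_retraction hke hr
  refine ⟨s ≫ pullback.snd g p, ?_⟩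
  rw [Category.assoc, ← pullback.condition, ← Category.assoc, hs, Category.id_comp]

lemma isShortExact_kernel {E A : C} (p : E ⟶ A) [Epi p] : IsShortExact (kernel.ι p) p :=
  ⟨kernel.condition p,
    ShortComplex.ShortExact.mk'
      ((ShortComplex.mk _ _ (kernel.condition p)).exact_of_f_is_kernel (kernelIsKernel p))
      inferInstance inferInstance⟩


section Aux

variable (V : C)

/-- `V` is a coproduct of one copy of itself. -/
lemma isCoproductIn_self : IsCoproductIn (Set.univ : Set C)
    (fun _ : PUnit.{v+1} => V) V (fun _ => 𝟙 V) where
  mem := fun _ => trivial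
  memQ := trivial
  desc := fun Z _ g => ⟨g PUnit.unit, fun i => by cases i; simp,
    fun y hy => by rw [← hy PUnit.unit, Category.id_comp]⟩

lemma mem_addIn_self : V ∈ addIn (Set.univ : Set C) V :=
  ⟨trivial, PUnit.{v+1}, V, fun _ => 𝟙 V, isCoproductIn_self V, 𝟙 V, 𝟙 V, by simp⟩

lemma addIn_subset_genIn : addIn (Set.univ : Set C) V ⊆ genIn Set.univ V := by
  rintro A ⟨-, I, Q, ι, hQ, s, r, hsr⟩
  haveI : Epi (s ≫ r) := by rw [hsr]; infer_instance
  haveI : Epi r := epi_of_epi s r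
  exact ⟨trivial, Q, ⟨trivial, I, Q, ι, hQ, 𝟙 Q, 𝟙 Q, by simp⟩, r, ‹_›⟩

lemma genIn_quot_closed {A B : C} (hA : A ∈ genIn (Set.univ : Set C) V) (e : A ⟶ B)
    (he : Epi e) : B ∈ genIn (Set.univ : Set C) V := by
  obtain ⟨-, X, hX, q, hq⟩ := hA
  exact ⟨trivial, X, hX, q ≫ e, @epi_comp _ _ _ _ _ q hq e he⟩

lemma mem_B_of_mem_T {A : C} (hA : A ∈ genIn (Set.univ : Set C) V) :
    A ∈ subIn (Set.univ : Set C) (genIn Set.univ V) :=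
  ⟨trivial, A, hA, 𝟙 A, inferInstance⟩

lemma B_quot_closed {A Q : C} (hA : A ∈ subIn (Set.univ : Set C) (genIn Set.univ V))
    (e : A ⟶ Q) (he : Epi e) : Q ∈ subIn (Set.univ : Set C) (genIn Set.univ V) := by
  obtain ⟨-, T, hT, n, hn⟩ := hA
  haveI := hn; haveI := he
  have hepi : Epi (pushout.inr e n) := by
    constructor
    intro W u v huv
    refine pushout.hom_ext ?_ huv
    rw [← cancel_epi e]
    simp only [← Category.assoc, pushout.condition]
    simp only [Category.assoc, huv]
  refine ⟨trivial, pushout e n, genIn_quot_closed V hT (pushout.inr e n) hepi,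
    pushout.inl e n, inferInstance⟩

/-- `Gen(V)` is closed under binary biproducts (via coproduct combination). -/
lemma isCoproductIn_biprod {I I' : Type v} {Q Q' : C} {ι : ∀ _ : I, V ⟶ Q}
    {ι' : ∀ _ : I', V ⟶ Q'}
    (h : IsCoproductIn (Set.univ : Set C) (fun _ : I => V) Q ι)
    (h' : IsCoproductIn (Set.univ : Set C) (fun _ : I' => V) Q' ι') :
    IsCoproductIn (Set.univ : Set C) (fun _ : I ⊕ I' => V) (Q ⊞ Q')
      (fun j => Sum.rec (fun a => ι a ≫ biprod.inl) (fun b => ι' b ≫ biprod.inr) j) where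
  mem := fun _ => trivial
  memQ := trivial
  desc := by
    intro Z _ g
    obtain ⟨h₁, hh₁, hu₁⟩ := h.desc Z trivial (fun a => g (Sum.inl a))
    obtain ⟨h₂, hh₂, hu₂⟩ := h'.desc Z trivial (fun b => g (Sum.inr b))
    refine ⟨biprod.desc h₁ h₂, ?_, ?_⟩
    · rintro (a | b)
      · rw [Category.assoc, biprod.inl_desc]; exact hh₁ a
      · rw [Category.assoc, biprod.inr_desc]; exact hh₂ b
    · intro m hm
      apply biprod.hom_ext'
      · rw [biprod.inl_desc]
        exact hu₁ _ (fun a => by rw [← Category.assoc]; exact hm (Sum.inl a))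
      · rw [biprod.inr_desc]
        exact hu₂ _ (fun b => by rw [← Category.assoc]; exact hm (Sum.inr b))

lemma mono_biprod_map {A A' T T' : C} (n : A ⟶ T) (n' : A' ⟶ T') (hn : Mono n)
    (hn' : Mono n') : Mono (biprod.map n n') := by
  rw [Preadditive.mono_iff_cancel_zero]
  intro W g hg
  apply biprod.hom_ext
  · rw [zero_comp]
    refine zero_of_comp_mono n ?_
    rw [Category.assoc, ← biprod.map_fst, ← Category.assoc, hg, zero_comp]
  · rw [zero_comp]
    refine zero_of_comp_mono n' ?_
    rw [Category.assoc, ← biprod.map_snd, ← Category.assoc, hg, zero_comp]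

lemma epi_biprod_map {A A' T T' : C} (n : A ⟶ T) (n' : A' ⟶ T') (hn : Epi n)
    (hn' : Epi n') : Epi (biprod.map n n') := by
  rw [Preadditive.epi_iff_cancel_zero]
  intro W g hg
  apply biprod.hom_ext'
  · rw [comp_zero]
    refine zero_of_epi_comp n ?_
    rw [← Category.assoc, ← biprod.inl_map, Category.assoc, hg, comp_zero]
  · rw [comp_zero]
    refine zero_of_epi_comp n' ?_
    rw [← Category.assoc, ← biprod.inr_map, Category.assoc, hg, comp_zero]

lemma addIn_biprod {X X' : C} (hX : X ∈ addIn (Set.univ : Set C) V)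
    (hX' : X' ∈ addIn (Set.univ : Set C) V) : (X ⊞ X') ∈ addIn (Set.univ : Set C) V := by
  obtain ⟨-, I, Q, ι, hQ, s, r, hsr⟩ := hX
  obtain ⟨-, I', Q', ι', hQ', s', r', hsr'⟩ := hX'
  refine ⟨trivial, I ⊕ I', Q ⊞ Q',
    fun j => Sum.rec (fun a => ι a ≫ biprod.inl) (fun b => ι' b ≫ biprod.inr) j,
    isCoproductIn_biprod V hQ hQ', biprod.map s s', biprod.map r r', ?_⟩
  apply biprod.hom_ext
  · simp [hsr]
  · simp [hsr']

end Aux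

section Torsion

variable {T F : Set C} (hTP : IsTorsionPairIn (Set.univ : Set C) T F)
include hTP

lemma hom_zero_of_mem_T {X Y : C} (hX : X ∈ T) (hY : Y ∈ F) (f : X ⟶ Y) : f = 0 :=
  (hTP.eqT ▸ hX : X ∈ {A ∈ Set.univ | ∀ Y ∈ F, ∀ f : A ⟶ Y, f = 0}).2 Y hY f

lemma mem_T_of_hom {A : C} (h : ∀ Y ∈ F, ∀ f : A ⟶ Y, f = 0) : A ∈ T :=
  hTP.eqT ▸ (⟨trivial, h⟩ : A ∈ {A ∈ Set.univ | ∀ Y ∈ F, ∀ f : A ⟶ Y, f = 0})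

lemma mem_F_of_hom {A : C} (h : ∀ X ∈ T, ∀ f : X ⟶ A, f = 0) : A ∈ F :=
  hTP.eqF ▸ (⟨trivial, h⟩ : A ∈ {A ∈ Set.univ | ∀ X ∈ T, ∀ f : X ⟶ A, f = 0})

lemma hom_zero_of_mem_F {X Y : C} (hX : X ∈ T) (hY : Y ∈ F) (f : X ⟶ Y) : f = 0 :=
  (hTP.eqF ▸ hY : Y ∈ {A ∈ Set.univ | ∀ X ∈ T, ∀ f : X ⟶ A, f = 0}).2 X hX f

lemma T_ext_closed {T1 A T2 : C} {i : T1 ⟶ A} {p : A ⟶ T2} (hse : IsShortExact i p)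
    (h1 : T1 ∈ T) (h2 : T2 ∈ T) : A ∈ T := by
  apply mem_T_of_hom hTP
  intro Y hY f
  obtain ⟨hw, hse'⟩ := hse
  haveI := hse'.mono_f; haveI := hse'.epi_g
  have hif : i ≫ f = 0 := hom_zero_of_mem_T hTP h1 hY _
  obtain ⟨w, hw2⟩ := hse'.exact.desc' f hif
  rw [← hw2, hom_zero_of_mem_T hTP h2 hY w, comp_zero]

lemma F_sub_closed {A Y : C} (hY : Y ∈ F) (m : A ⟶ Y) (hm : Mono m) : A ∈ F := by
  apply mem_F_of_hom hTP
  intro X hX f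
  haveI := hm
  exact zero_of_comp_mono m (hom_zero_of_mem_T hTP hX hY (f ≫ m))

end Torsion

section Mid

lemma ext1_coprod {V : C} {I : Type v} {Q : C} {ι : ∀ _ : I, V ⟶ Q}
    (hQ : IsCoproductIn (Set.univ : Set C) (fun _ : I => V) Q ι) {X : C}
    (hX : Ext1ZeroIn Set.univ V X) : Ext1ZeroIn Set.univ Q X := by
  intro E _ i p hse
  have hlift : ∀ j : I, ∃ ℓ : V ⟶ E, ℓ ≫ p = ι j := fun j => lift_of_ext1 hse (ι j) hX
  choose ℓ hℓ using hlift
  obtain ⟨h, hh, -⟩ := hQ.desc E trivial ℓ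
  obtain ⟨c, -, hcu⟩ := hQ.desc Q trivial ι
  have e1 : h ≫ p = c := hcu _ (fun j => by rw [← Category.assoc, hh j, hℓ j])
  have e2 : 𝟙 Q = c := hcu _ (fun j => Category.comp_id _)
  exact splitting_of_section hse (e1.trans e2.symm)

lemma ext1_retract {A Q : C} {s : A ⟶ Q} {r : Q ⟶ A} (hsr : s ≫ r = 𝟙 A) {X : C}
    (hQX : Ext1ZeroIn Set.univ Q X) : Ext1ZeroIn Set.univ A X := by
  intro E _ i p hse
  obtain ⟨ℓ, hℓ⟩ := lift_of_ext1 hse r hQX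
  exact splitting_of_section hse (show (s ≫ ℓ) ≫ p = 𝟙 A by rw [Category.assoc, hℓ, hsr])

/-- Statement (2): `Add(V) = ^{⊥₁}Gen(V) ∩ Gen(V)`. -/
lemma addIn_eq_perp (V : C) (hV : IsQuasiTiltingIn (Set.univ : Set C) V) :
    addIn (Set.univ : Set C) V =
      leftPerpSet Set.univ (genIn Set.univ V) ∩ genIn Set.univ V := by
  obtain ⟨-, -, hGP, hGBR⟩ := hV
  have hTrp : ∀ X ∈ genIn (Set.univ : Set C) V, Ext1ZeroIn Set.univ V X := by
    intro X hX
    rw [hGBR] at hX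
    exact hX.2.2
  ext A
  constructor
  · intro hA
    refine ⟨⟨trivial, ?_⟩, addIn_subset_genIn V hA⟩
    intro X hX
    obtain ⟨-, I, Q, ι, hQ, s, r, hsr⟩ := hA
    exact ext1_retract hsr (ext1_coprod hQ (hTrp X hX))
  · rintro ⟨⟨-, hperp⟩, hAT⟩
    rw [hGP] at hAT
    obtain ⟨-, X, hX, Y, hY, f, c, hw, hc, hex⟩ := hAT
    haveI := hc
    have hK : kernel c ∈ genIn (Set.univ : Set C) V := by
      haveI hepi : Epi (ShortComplex.mk f c hw).toCycles :=
        (ShortComplex.exact_iff_epi_toCycles _).1 hex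
      exact ⟨trivial, X, hX,
        (ShortComplex.mk f c hw).toCycles ≫ (ShortComplex.cyclesIsoKernel _).hom,
        epi_comp _ _⟩
    have hseK := isShortExact_kernel c
    obtain ⟨ρ, hρ⟩ := hperp (kernel c) hK Y trivial (kernel.ι c) c hseK
    obtain ⟨s, hs⟩ := section_of_retraction hseK hρ
    obtain ⟨-, I, Q, ι, hQ, sY, rY, hsr⟩ := hY
    refine ⟨trivial, I, Q, ι, hQ, s ≫ sY, rY ≫ c, ?_⟩
    rw [Category.assoc, ← Category.assoc sY, hsr, Category.id_comp, hs]

variable {V : C} {F : Set C}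
  (hTP : IsTorsionPairIn (Set.univ : Set C) (genIn Set.univ V) F)
include hTP

lemma addInB_sub_genIn {A : C}
    (hA : A ∈ addIn (subIn (Set.univ : Set C) (genIn Set.univ V)) V) :
    A ∈ genIn (Set.univ : Set C) V := by
  obtain ⟨hAB, I, Q, ι, hQB, s, r, hsr⟩ := hA
  have hVT : V ∈ genIn (Set.univ : Set C) V := addIn_subset_genIn V (mem_addIn_self V)
  obtain ⟨tQ, Fq, m, π, htQ, hFq, hse⟩ := hTP.seq Q trivial
  obtain ⟨hw, hse'⟩ := hse
  haveI := hse'.mono_f; haveI := hse'.epi_g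
  have hfac : ∀ j : I, ∃ l : V ⟶ tQ, l ≫ m = ι j := fun j =>
    hse'.exact.lift' (ι j) (hom_zero_of_mem_T hTP hVT hFq _)
  choose l hl using hfac
  obtain ⟨h, hh, -⟩ := hQB.desc tQ (mem_B_of_mem_T V htQ) l
  obtain ⟨c2, -, hcu⟩ := hQB.desc Q hQB.memQ ι
  have e1 : h ≫ m = c2 := hcu _ (fun j => by rw [← Category.assoc, hh j, hl j])
  have e2 : 𝟙 Q = c2 := hcu _ (fun j => Category.comp_id _)
  haveI : Epi (h ≫ m) := by rw [e1.trans e2.symm]; infer_instance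
  haveI : Epi m := epi_of_epi h m
  have hQT : Q ∈ genIn (Set.univ : Set C) V := genIn_quot_closed V htQ m ‹Epi m›
  haveI : Epi (s ≫ r) := by rw [hsr]; infer_instance
  exact genIn_quot_closed V hQT r (epi_of_epi s r)

omit hTP in
lemma addIn_univ_sub_addInB {A : C} (hA : A ∈ addIn (Set.univ : Set C) V) :
    A ∈ addIn (subIn (Set.univ : Set C) (genIn Set.univ V)) V := by
  have hAT := addIn_subset_genIn V hA
  obtain ⟨-, I, Q, ι, hQ, s, r, hsr⟩ := hA
  have hQT : Q ∈ genIn (Set.univ : Set C) V :=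
    addIn_subset_genIn V ⟨trivial, I, Q, ι, hQ, 𝟙 Q, 𝟙 Q, by simp⟩
  have hVT : V ∈ genIn (Set.univ : Set C) V := addIn_subset_genIn V (mem_addIn_self V)
  exact ⟨mem_B_of_mem_T V hAT, I, Q, ι,
    ⟨fun _ => mem_B_of_mem_T V hVT, mem_B_of_mem_T V hQT,
     fun Z _ g => hQ.desc Z trivial g⟩, s, r, hsr⟩

lemma genInB_eq :
    genIn (subIn (Set.univ : Set C) (genIn Set.univ V)) V = genIn (Set.univ : Set C) V := by
  ext A
  constructor
  · rintro ⟨hAB, X, hXadd, q, hq⟩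
    exact genIn_quot_closed V (addInB_sub_genIn hTP hXadd) q hq
  · intro hA
    have hA' := hA
    obtain ⟨-, X, hXadd, q, hq⟩ := hA'
    exact ⟨mem_B_of_mem_T V hA, X, addIn_univ_sub_addInB hXadd, q, hq⟩

end Mid

theorem statement7 (V : C) (hV : IsQuasiTiltingIn (Set.univ : Set C) V) :
    -- (1) `ℬ := Sub(Gen V)` is an abelian exact subcategory (closed under finite
    -- coproducts, kernels and cokernels) and `V` is a tilting object of `ℬ`
    ((∀ Z : C, Limits.IsZero Z → Z ∈ subIn Set.univ (genIn Set.univ V)) ∧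
     (∀ A A' : C, A ∈ subIn Set.univ (genIn Set.univ V) →
        A' ∈ subIn Set.univ (genIn Set.univ V) →
        (A ⊞ A') ∈ subIn Set.univ (genIn Set.univ V)) ∧
     (∀ ⦃A A' : C⦄ (f : A ⟶ A'), A ∈ subIn Set.univ (genIn Set.univ V) →
        A' ∈ subIn Set.univ (genIn Set.univ V) →
        Limits.kernel f ∈ subIn Set.univ (genIn Set.univ V) ∧
        Limits.cokernel f ∈ subIn Set.univ (genIn Set.univ V)) ∧
     IsTiltingIn (subIn Set.univ (genIn Set.univ V)) V) ∧
    -- (2) `Add(V) = ^{⊥₁}𝒯 ∩ 𝒯`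
    (addIn Set.univ V =
      leftPerpSet Set.univ (genIn Set.univ V) ∩ genIn Set.univ V) ∧
    -- (3) two quasi-tilting objects generate the same class iff they are equivalent
    (∀ V' : C, IsQuasiTiltingIn (Set.univ : Set C) V' →
      (genIn Set.univ V = genIn Set.univ V' ↔
        addIn Set.univ V = addIn Set.univ V')) := by
  obtain ⟨-, ⟨F, hTP⟩, hGP, hGBR⟩ := hV
  have hVqt : IsQuasiTiltingIn (Set.univ : Set C) V := ⟨trivial, ⟨F, hTP⟩, hGP, hGBR⟩
  have hVT : V ∈ genIn (Set.univ : Set C) V := addIn_subset_genIn V (mem_addIn_self V)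
  have hTrp : ∀ X ∈ genIn (Set.univ : Set C) V, Ext1ZeroIn Set.univ V X := by
    intro X hX
    rw [hGBR] at hX
    exact hX.2.2
  have hgenB := genInB_eq hTP
  refine ⟨⟨?_, ?_, ?_, ?_⟩, addIn_eq_perp V hVqt, ?_⟩
  · -- zero objects
    intro Z hz
    exact ⟨trivial, V, hVT, hz.to_ V,
      { right_cancellation := fun g h _ => hz.eq_of_tgt g h }⟩
  · -- biproducts
    rintro A A' ⟨-, T1, hT1, n, hn⟩ ⟨-, T2, hT2, n', hn'⟩
    obtain ⟨-, X, hX, q, hq⟩ := hT1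
    obtain ⟨-, X', hX', q', hq'⟩ := hT2
    exact ⟨trivial, T1 ⊞ T2,
      ⟨trivial, X ⊞ X', addIn_biprod V hX hX', biprod.map q q', epi_biprod_map _ _ hq hq'⟩,
      biprod.map n n', mono_biprod_map _ _ hn hn'⟩
  · -- kernels and cokernels
    intro A A' f hA hA'
    constructor
    · obtain ⟨-, T1, hT1, n, hn⟩ := hA
      haveI := hn
      exact ⟨trivial, T1, hT1, kernel.ι f ≫ n, mono_comp _ _⟩
    · exact B_quot_closed V hA' (cokernel.π f) inferInstance
  · -- V is tilting in B
    have hVB : V ∈ subIn (Set.univ : Set C) (genIn Set.univ V) := mem_B_of_mem_T V hVT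
    have hTPB : IsTorsionPairIn (subIn (Set.univ : Set C) (genIn Set.univ V))
        (genIn Set.univ V) (F ∩ subIn (Set.univ : Set C) (genIn Set.univ V)) := by
      refine ⟨?_, ?_, ?_⟩
      · ext Y
        constructor
        · rintro ⟨hYF, hYB⟩
          exact ⟨hYB, fun X hX f => hom_zero_of_mem_F hTP hX hYF f⟩
        · rintro ⟨hYB, hprop⟩
          exact ⟨mem_F_of_hom hTP (fun X hX f => hprop X hX f), hYB⟩
      · ext A
        constructor
        · intro hA
          exact ⟨mem_B_of_mem_T V hA, fun Y hY f => hom_zero_of_mem_T hTP hA hY.1 f⟩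
        · rintro ⟨hAB, hprop⟩
          apply mem_T_of_hom hTP
          intro Y hY f
          have h1 : Abelian.factorThruImage f = 0 :=
            hprop (Abelian.image f)
              ⟨F_sub_closed hTP hY (Abelian.image.ι f) inferInstance,
               B_quot_closed V hAB (Abelian.factorThruImage f) inferInstance⟩ _
          rw [← Abelian.image.fac f, h1, zero_comp]
      · intro A hAB
        obtain ⟨X, Y, i, p, hX, hY, hse⟩ := hTP.seq A trivial
        obtain ⟨hw, hse'⟩ := hse
        exact ⟨X, Y, i, p, hX, ⟨hY, B_quot_closed V hAB p hse'.epi_g⟩, hw, hse'⟩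
    have hpresB : genIn (subIn (Set.univ : Set C) (genIn Set.univ V)) V =
        presIn (subIn (Set.univ : Set C) (genIn Set.univ V)) V := by
      ext A
      constructor
      · intro hA
        have hAT : A ∈ genIn (Set.univ : Set C) V := by rw [← hgenB]; exact hA
        have hATp : A ∈ presIn (Set.univ : Set C) V := by rw [← hGP]; exact hAT
        obtain ⟨-, X, hX, Y, hY, f2, c2, hw2, hc2, hex2⟩ := hATp
        exact ⟨mem_B_of_mem_T V hAT, X, addIn_univ_sub_addInB hX, Y,
          addIn_univ_sub_addInB hY, f2, c2, hw2, hc2, hex2⟩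
      · rintro ⟨hAB, X, hX, Y, hY, f2, c2, hw2, hc2, hex2⟩
        rw [hgenB]
        exact genIn_quot_closed V (addInB_sub_genIn hTP hY) c2 hc2
    have hbarB : genIn (subIn (Set.univ : Set C) (genIn Set.univ V)) V =
        barGenIn (subIn (Set.univ : Set C) (genIn Set.univ V)) V ∩
          rightPerp (subIn (Set.univ : Set C) (genIn Set.univ V)) V := by
      ext A
      constructor
      · intro hA
        have hAT : A ∈ genIn (Set.univ : Set C) V := by rw [← hgenB]; exact hA
        exact ⟨⟨mem_B_of_mem_T V hAT, A, hA, 𝟙 A, inferInstance⟩,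
          mem_B_of_mem_T V hAT, fun E _ i p hse => hTrp A hAT E trivial i p hse⟩
      · rintro ⟨⟨hAB, -⟩, -, hextB⟩
        rw [hgenB]
        have hext : Ext1ZeroIn Set.univ V A := by
          intro E _ i p hse
          obtain ⟨-, T1, hT1, n, hn⟩ := hAB
          haveI := hn
          obtain ⟨d, hd, hseP⟩ := isShortExact_pushout hse n
          have hPT : pushout n i ∈ genIn (Set.univ : Set C) V :=
            T_ext_closed hTP hseP hT1 hVT
          have hEB : E ∈ subIn (Set.univ : Set C) (genIn Set.univ V) :=
            ⟨trivial, pushout n i, hPT, pushout.inr n i, inferInstance⟩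
          exact hextB E hEB i p hse
        rw [hGBR]
        exact ⟨hAB, trivial, hext⟩
    refine ⟨⟨hVB, ⟨F ∩ subIn (Set.univ : Set C) (genIn Set.univ V), ?_⟩, hpresB, hbarB⟩, ?_⟩
    · rw [hgenB]
      exact hTPB
    · intro A hA
      have hA' := hA
      obtain ⟨-, T1, hT1, n, hn⟩ := hA'
      exact ⟨T1, by rw [hgenB]; exact hT1, n, hn⟩
  · -- statement (3)
    intro V' hV'
    constructor
    · intro hgen
      rw [addIn_eq_perp V hVqt, addIn_eq_perp V' hV', hgen]
    · intro hadd
      unfold genIn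
      rw [hadd]


end Stmt7
end
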